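/- arXiv:1207.6633 — 5 statements merged into one kernel-verified Lean document; each statement's English description precedes it below -/
import Mathlib

section
/- Let N ≥ 2 and let e_1 ≤ e_2 ≤ … ≤ e_N be real numbers with e_1 ≥ 0. Let r_1 ≥ … ≥ r_N and r'_1 ≥ … ≥ r'_N be real numbers with r'_N = r_N and r_j ≤ r'_j for all 1 ≤ j ≤ N − 1. Then S(e, r) ≤ S(e, r'). -/
open Finset

/-- The value of a chain of indices `l = [i₀, i₁, …, i_ℓ]`:
`Σ_j (r i_j − r i_{j+1}) (e i_j + e i_{j+1})`. -/
def chainValue (e r : ℕ → ℝ) (l : List ℕ) : ℝ :=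
  (List.zipWith (fun a b => (r a - r b) * (e a + e b)) l l.tail).sum

/-- A chain of indices for parameter `N`: a strictly increasing list of indices
starting at `1` and ending at `N`. -/
def IsChainIdx (N : ℕ) (l : List ℕ) : Prop :=
  l.Chain' (· < ·) ∧ l.head? = some 1 ∧ l.getLast? = some N

/-- `S(e, r)` : the minimum of the values of all chains. -/
noncomputable def Smin (e r : ℕ → ℝ) (N : ℕ) : ℝ :=
  sInf (chainValue e r '' {l | IsChainIdx N l})

lemma chainValue_cons_cons (e r : ℕ → ℝ) (a b : ℕ) (l : List ℕ) :
    chainValue e r (a :: b :: l) = (r a - r b) * (e a + e b) + chainValue e r (b :: l) := by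
  simp [chainValue]

lemma le_getLast_of_mem_chain : ∀ (l : List ℕ) (N : ℕ), l.Chain' (· < ·) →
    l.getLast? = some N → ∀ x ∈ l, x ≤ N := by
  intro l
  induction l with
  | nil => simp
  | cons a t ih =>
    intro N hc hl x hx
    cases t with
    | nil =>
      simp at hl hx; omega
    | cons b t' =>
      have hab : a < b := (List.isChain_cons_cons.mp hc).1
      have hl' : (b :: t').getLast? = some N := by
        rw [List.getLast?_cons_cons] at hl; exact hl
      have hbN := ih N hc.tail hl' b (by simp)
      rcases List.mem_cons.mp hx with h | h
      · omega
      · exact ih N hc.tail hl' x h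

lemma head_le_of_mem_chain : ∀ (l : List ℕ) (a : ℕ), l.Chain' (· < ·) →
    l.head? = some a → ∀ x ∈ l, a ≤ x := by
  intro l
  induction l with
  | nil => simp
  | cons c t ih =>
    intro a hc hh x hx
    simp only [List.head?_cons, Option.some.injEq] at hh
    cases t with
    | nil => simp at hx; omega
    | cons b t' =>
      have hab : c < b := (List.isChain_cons_cons.mp hc).1
      rcases List.mem_cons.mp hx with h | h
      · omega
      · have := ih b hc.tail (by simp) x h
        omega

/-- The key Abel-summation style estimate. -/
lemma chain_aux (N : ℕ) (e r r' : ℕ → ℝ)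
    (hd : ∀ i, 1 ≤ i → i ≤ N → 0 ≤ r' i - r i)
    (hemono : ∀ i j, 1 ≤ i → i ≤ j → j ≤ N → e i ≤ e j)
    (hend : r' N = r N) :
    ∀ (l : List ℕ) (a b : ℕ), (a :: b :: l).Chain' (· < ·) → 1 ≤ a →
      (a :: b :: l).getLast? = some N →
      chainValue e r (a :: b :: l) + (r' a - r a) * (e a + e b)
        ≤ chainValue e r' (a :: b :: l) := by
  intro l
  induction l with
  | nil =>
    intro a b hc ha hl
    have hbN : b = N := by simpa using hl
    subst hbN
    simp only [chainValue, List.tail, List.zipWith, List.sum_cons, List.sum_nil]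
    rw [hend]; ring_nf; exact le_rfl
  | cons c t ih =>
    intro a b hc ha hl
    have hab : a < b := (List.isChain_cons_cons.mp hc).1
    have hbc : b < c := (List.isChain_cons_cons.mp hc.tail).1
    have hl' : (b :: c :: t).getLast? = some N := by
      rw [List.getLast?_cons_cons] at hl; exact hl
    have hcN : c ≤ N := le_getLast_of_mem_chain _ N hc.tail hl' c (by simp)
    have hbN : b ≤ N := by omega
    have IH := ih b c hc.tail (by omega) hl'
    rw [chainValue_cons_cons e r, chainValue_cons_cons e r']
    have hdb : 0 ≤ r' b - r b := hd b (by omega) hbN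
    have hea : e a ≤ e c := hemono a c ha (by omega) hcN
    nlinarith [IH, hdb, hea]

lemma chainValue_nonneg (N : ℕ) (e r : ℕ → ℝ)
    (hrmono : ∀ i j, 1 ≤ i → i ≤ j → j ≤ N → r j ≤ r i)
    (henn : ∀ i, 1 ≤ i → i ≤ N → 0 ≤ e i) :
    ∀ (l : List ℕ), l.Chain' (· < ·) → (∀ x ∈ l, 1 ≤ x ∧ x ≤ N) →
      0 ≤ chainValue e r l := by
  intro l
  induction l with
  | nil => intro _ _; simp [chainValue]
  | cons a t ih =>
    intro hc hm
    cases t with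
    | nil => simp [chainValue]
    | cons b t' =>
      have hab : a < b := (List.isChain_cons_cons.mp hc).1
      have ha := hm a (by simp)
      have hb := hm b (by simp)
      have h1 : r b ≤ r a := hrmono a b ha.1 (le_of_lt hab) hb.2
      have h2 : 0 ≤ e a := henn a ha.1 ha.2
      have h3 : 0 ≤ e b := henn b hb.1 hb.2
      have h4 : 0 ≤ chainValue e r (b :: t') := by
        refine ih hc.tail ?_
        intro x hx; exact hm x (List.mem_cons_of_mem a hx)
      rw [chainValue_cons_cons]
      nlinarith

/-- Let `N ≥ 2`, `0 ≤ e₁ ≤ e₂ ≤ … ≤ e_N`, and let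
`r₁ ≥ … ≥ r_N` and `r'₁ ≥ … ≥ r'_N` with `r'_N = r_N` and `r_j ≤ r'_j`
for all `1 ≤ j ≤ N − 1`. Then `S(e, r) ≤ S(e, r')`. -/
theorem stmt2 (N : ℕ) (e r r' : ℕ → ℝ) (hN : 2 ≤ N)
    (he1 : 0 ≤ e 1)
    (hemono : ∀ i, 1 ≤ i → i < N → e i ≤ e (i + 1))
    (hr : ∀ i, 1 ≤ i → i < N → r (i + 1) ≤ r i)
    (hr' : ∀ i, 1 ≤ i → i < N → r' (i + 1) ≤ r' i)
    (hend : r' N = r N)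
    (hle : ∀ j, 1 ≤ j → j ≤ N - 1 → r j ≤ r' j) :
    Smin e r N ≤ Smin e r' N := by
  -- two-index monotonicity of e
  have hemono2 : ∀ i j, 1 ≤ i → i ≤ j → j ≤ N → e i ≤ e j := by
    intro i j h1 hij hjN
    induction j with
    | zero => omega
    | succ k ih =>
      rcases Nat.lt_or_ge i (k + 1) with h | h
      · have hik : i ≤ k := by omega
        exact le_trans (ih hik (by omega)) (hemono k (by omega) (by omega))
      · have : i = k + 1 := by omega
        simp [this]
  have hrmono2 : ∀ i j, 1 ≤ i → i ≤ j → j ≤ N → r j ≤ r i := by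
    intro i j h1 hij hjN
    induction j with
    | zero => omega
    | succ k ih =>
      rcases Nat.lt_or_ge i (k + 1) with h | h
      · have hik : i ≤ k := by omega
        exact le_trans (hr k (by omega) (by omega)) (ih hik (by omega))
      · have : i = k + 1 := by omega
        simp [this]
  have henn : ∀ i, 1 ≤ i → i ≤ N → 0 ≤ e i := fun i h1 hiN =>
    le_trans he1 (hemono2 1 i le_rfl h1 hiN)
  have hd : ∀ i, 1 ≤ i → i ≤ N → 0 ≤ r' i - r i := by
    intro i h1 hiN
    rcases eq_or_lt_of_le hiN with h | h
    · subst h; rw [hend]; linarith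
    · have := hle i h1 (by omega); linarith
  -- chain elements are in [1, N]
  have hmem : ∀ l, IsChainIdx N l → ∀ x ∈ l, 1 ≤ x ∧ x ≤ N := by
    rintro l ⟨hc, hh, hl⟩ x hx
    exact ⟨head_le_of_mem_chain l 1 hc hh x hx, le_getLast_of_mem_chain l N hc hl x hx⟩
  -- pointwise comparison of chain values
  have hpt : ∀ l, IsChainIdx N l → chainValue e r l ≤ chainValue e r' l := by
    rintro l hch
    obtain ⟨hc, hh, hl⟩ := hch
    match l, hh with
    | a :: t, hh =>
      have ha : a = 1 := by simpa using hh
      subst ha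
      cases t with
      | nil =>
        have : (1 : ℕ) = N := by simpa using hl
        omega
      | cons b t' =>
        have key := chain_aux N e r r' hd hemono2 hend t' 1 b hc le_rfl hl
        have hb : 1 ≤ b ∧ b ≤ N := hmem _ ⟨hc, hh, hl⟩ b (by simp)
        have heb : 0 ≤ e b := henn b hb.1 hb.2
        have hd1 : 0 ≤ r' 1 - r 1 := hd 1 le_rfl (by omega)
        nlinarith [key]
  -- the standard chain [1, N] shows nonemptiness
  have hchain0 : IsChainIdx N [1, N] := by
    refine ⟨?_, rfl, rfl⟩
    simp only [List.Chain', List.isChain_cons_cons, List.isChain_singleton, and_true]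
    omega
  have hBdd : BddBelow (chainValue e r '' {l | IsChainIdx N l}) := by
    refine ⟨0, ?_⟩
    rintro x ⟨l, hl, rfl⟩
    exact chainValue_nonneg N e r hrmono2 henn l hl.1 (hmem l hl)
  have hne : (chainValue e r' '' {l | IsChainIdx N l}).Nonempty :=
    ⟨chainValue e r' [1, N], ⟨[1, N], hchain0, rfl⟩⟩
  refine le_csInf hne ?_
  rintro x ⟨l, hl, rfl⟩
  exact le_trans (csInf_le hBdd ⟨l, hl, rfl⟩) (hpt l hl)
end

section
/- Let N ≥ 2, let e_1 < e_2 < … < e_N be real numbers, and let r_1 ≥ r_2 ≥ … ≥ r_N be real numbers. Then there exist real numbers r'_1 ≥ r'_2 ≥ … ≥ r'_N with r'_1 = r_1, r'_N = r_N, r'_j ≤ r_j for all j, satisfying the convexity condition (r'_i − r'_{i+1})(e_i − e_{i−1}) ≤ (r'_{i−1} − r'_i)(e_{i+1} − e_i) for all 2 ≤ i ≤ N − 1, and such that S(e, r') = S(e, r). (This is the step of moving the points (e_j, r_j) down onto their Newton polygon, which changes neither S nor the endpoints but only decreases each r_j.) -/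
open Finset

set_option linter.unusedSectionVars false

namespace Stmt3

/-- edge value -/
def ev (e ρ : ℕ → ℝ) (a b : ℕ) : ℝ := (ρ a - ρ b) * (e a + e b)

theorem chainValue_nil (e ρ : ℕ → ℝ) : chainValue e ρ [] = 0 := rfl

theorem chainValue_single (e ρ : ℕ → ℝ) (a : ℕ) : chainValue e ρ [a] = 0 := rfl

theorem chainValue_cons (e ρ : ℕ → ℝ) (a b : ℕ) (t : List ℕ) :
    chainValue e ρ (a :: b :: t) = ev e ρ a b + chainValue e ρ (b :: t) := rfl

theorem chainValue_cons_head (e ρ : ℕ → ℝ) (a : ℕ) (l : List ℕ) (y : ℕ)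
    (h : l.head? = some y) :
    chainValue e ρ (a :: l) = ev e ρ a y + chainValue e ρ l := by
  cases l with
  | nil => simp at h
  | cons z t =>
    simp only [List.head?_cons, Option.some.injEq] at h
    rw [h]
    exact chainValue_cons e ρ a y t

theorem last_ge {l : List ℕ} (hc : l.Chain' (· < ·)) {b : ℕ} (hb : l.getLast? = some b) :
    ∀ x ∈ l, x ≤ b := by
  induction l with
  | nil => simp
  | cons a t ih =>
    intro x hx
    cases t with
    | nil => simp at hb hx; omega
    | cons c t' =>
      rw [List.getLast?_cons_cons] at hb
      rcases List.mem_cons.1 hx with h | h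
      · subst h
        have h1 : x < c := (List.isChain_cons_cons.1 hc).1
        have h2 : c ≤ b := ih (List.isChain_cons_cons.1 hc).2 hb c (List.mem_cons_self)
        omega
      · exact ih (List.isChain_cons_cons.1 hc).2 hb x h

theorem V_append (e ρ : ℕ → ℝ) : ∀ (l₁ : List ℕ) (k : ℕ) (t : List ℕ),
    l₁.getLast? = some k →
    chainValue e ρ (l₁ ++ t) = chainValue e ρ l₁ + chainValue e ρ (k :: t) := by
  intro l₁
  induction l₁ with
  | nil => intro k t h; simp at h
  | cons a l ih =>
    intro k t h
    cases l with
    | nil =>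
      simp at h
      subst h
      simp [chainValue_single]
    | cons c l' =>
      rw [List.getLast?_cons_cons] at h
      have : a :: c :: l' ++ t = a :: c :: (l' ++ t) := by simp
      rw [this, chainValue_cons, show c :: (l' ++ t) = (c :: l') ++ t by simp, ih k t h,
        chainValue_cons]
      ring

section Hull

variable (N : ℕ) (e r : ℕ → ℝ)

/-- affine minorant -/
def mino (a b : ℝ) : Prop := ∀ k, 1 ≤ k → k ≤ N → a * e k + b ≤ r k

/-- the set of values of affine minorants at `e j` -/
def SS (j : ℕ) : Set ℝ := {y | ∃ a b : ℝ, mino N e r a b ∧ y = a * e j + b}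

/-- the lower convex hull -/
noncomputable def g (j : ℕ) : ℝ := sSup (SS N e r j)

/-- slope of the hull on `[j, j+1]` -/
noncomputable def sl (j : ℕ) : ℝ := (g N e r (j + 1) - g N e r j) / (e (j + 1) - e j)

/-- sum of consecutive hull edges -/
noncomputable def F (a b : ℕ) : ℝ := ∑ j ∈ Finset.Ico a b, ev e (g N e r) j (j + 1)

/-- full segment chain -/
def fseg : ℕ → ℕ → List ℕ
  | a, 0 => [a]
  | a, n + 1 => a :: fseg (a + 1) n

variable (hN : 2 ≤ N) (he : ∀ i, 1 ≤ i → i < N → e i < e (i + 1))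
  (hr : ∀ i, 1 ≤ i → i < N → r (i + 1) ≤ r i)

include hN he hr

theorem e_lt : ∀ i j, 1 ≤ i → i < j → j ≤ N → e i < e j := by
  intro i j h1 h2 h3
  induction j with
  | zero => omega
  | succ m ih =>
    rcases Nat.lt_or_ge i m with h | h
    · exact lt_trans (ih h (by omega)) (he m (by omega) (by omega))
    · have : i = m := by omega
      subst this
      exact he i h1 (by omega)

theorem r_le : ∀ i j, 1 ≤ i → i ≤ j → j ≤ N → r j ≤ r i := by
  intro i j h1 h2 h3
  induction j with
  | zero => omega
  | succ m ih =>
    rcases Nat.lt_or_ge i (m + 1) with h | h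
    · exact le_trans (hr m (by omega) (by omega)) (ih (by omega) (by omega))
    · have : i = m + 1 := by omega
      subst this
      rfl

theorem SS_ne (j : ℕ) : (SS N e r j).Nonempty := by
  refine ⟨r N, 0, r N, fun k hk1 hk2 => ?_, by ring⟩
  simpa using r_le N e r hN he hr k N hk1 hk2 le_rfl

theorem SS_bdd (j : ℕ) (h1 : 1 ≤ j) (h2 : j ≤ N) : BddAbove (SS N e r j) := by
  refine ⟨r j, fun y hy => ?_⟩
  obtain ⟨a, b, hm, rfl⟩ := hy
  exact hm j h1 h2

theorem g_le_r (j : ℕ) (h1 : 1 ≤ j) (h2 : j ≤ N) : g N e r j ≤ r j := by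
  refine csSup_le (SS_ne N e r hN he hr j) fun y hy => ?_
  obtain ⟨a, b, hm, rfl⟩ := hy
  exact hm j h1 h2

theorem le_g {a b : ℝ} (hm : mino N e r a b) (j : ℕ) (h1 : 1 ≤ j) (h2 : j ≤ N) :
    a * e j + b ≤ g N e r j :=
  le_csSup (SS_bdd N e r hN he hr j h1 h2) ⟨a, b, hm, rfl⟩

theorem g_one : g N e r 1 = r 1 := by
  refine le_antisymm (g_le_r N e r hN he hr 1 (by omega) (by omega)) ?_
  have hne : (Finset.Icc 2 N).Nonempty := ⟨2, by simp only [Finset.mem_Icc]; omega⟩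
  set a : ℝ := Finset.inf' _ hne (fun k => (r k - r 1) / (e k - e 1)) with ha
  have hm : mino N e r a (r 1 - a * e 1) := by
    intro k hk1 hk2
    rcases Nat.lt_or_ge k 2 with h | h
    · have : k = 1 := by omega
      subst this; ring_nf; rfl
    · have hle : a ≤ (r k - r 1) / (e k - e 1) := by
        rw [ha]; exact Finset.inf'_le (fun k => (r k - r 1) / (e k - e 1)) (by rw [Finset.mem_Icc]; omega)
      have hpos : 0 < e k - e 1 := by
        have := e_lt N e r hN he hr 1 k (by omega) (by omega) hk2
        linarith
      have := (div_le_div_iff_of_pos_right hpos).2 (le_refl (r k - r 1))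
      nlinarith [(le_div_iff₀ hpos).1 hle]
  have := le_g N e r hN he hr hm 1 (by omega) (by omega)
  linarith

theorem g_N : g N e r N = r N := by
  refine le_antisymm (g_le_r N e r hN he hr N (by omega) le_rfl) ?_
  have hne : (Finset.Icc 1 (N - 1)).Nonempty := ⟨1, by simp only [Finset.mem_Icc]; omega⟩
  set a : ℝ := Finset.sup' _ hne (fun k => (r k - r N) / (e k - e N)) with ha
  have hm : mino N e r a (r N - a * e N) := by
    intro k hk1 hk2
    rcases Nat.lt_or_ge k N with h | h
    · have hmem : k ∈ Finset.Icc 1 (N - 1) := by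
        rw [Finset.mem_Icc]; omega
      have hle : (r k - r N) / (e k - e N) ≤ a := by
        rw [ha]; exact Finset.le_sup' (fun k => (r k - r N) / (e k - e N)) hmem
      have hneg : e k - e N < 0 := by
        have := e_lt N e r hN he hr k N hk1 h le_rfl
        linarith
      nlinarith [(div_le_iff_of_neg hneg).1 hle]
    · have : k = N := by omega
      subst this; ring_nf; rfl
  have := le_g N e r hN he hr hm N (by omega) le_rfl
  linarith

theorem rN_le_g (j : ℕ) (h1 : 1 ≤ j) (h2 : j ≤ N) : r N ≤ g N e r j := by
  have hm : mino N e r 0 (r N) := by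
    intro k hk1 hk2
    simpa using r_le N e r hN he hr k N hk1 hk2 le_rfl
  have := le_g N e r hN he hr hm j h1 h2
  linarith

theorem g_conv (i : ℕ) (h1 : 2 ≤ i) (h2 : i ≤ N - 1) :
    (g N e r i - g N e r (i + 1)) * (e i - e (i - 1)) ≤
      (g N e r (i - 1) - g N e r i) * (e (i + 1) - e i) := by
  obtain ⟨k, rfl⟩ : ∃ k, i = k + 2 := ⟨i - 2, by omega⟩
  have hk1 : 1 ≤ k + 1 := by omega
  have hd1 : 0 < e (k + 2) - e (k + 1) := by
    have := he (k + 1) (by omega) (by omega); linarith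
  have hd2 : 0 < e (k + 3) - e (k + 2) := by
    have := he (k + 2) (by omega) (by omega); linarith
  have hA := SS_bdd N e r hN he hr (k + 1) (by omega) (by omega)
  have hB := SS_bdd N e r hN he hr (k + 3) (by omega) (by omega)
  have key : g N e r (k + 2) * ((e (k + 2) - e (k + 1)) + (e (k + 3) - e (k + 2))) ≤
      g N e r (k + 1) * (e (k + 3) - e (k + 2)) +
      g N e r (k + 3) * (e (k + 2) - e (k + 1)) := by
    rw [show g N e r (k+2) * ((e (k + 2) - e (k + 1)) + (e (k + 3) - e (k + 2)))
        = g N e r (k+2) * (e (k+3) - e (k+1)) by ring]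
    have hpos : (0:ℝ) < e (k + 3) - e (k + 1) := by linarith
    rw [← le_div_iff₀ hpos]
    refine csSup_le (SS_ne N e r hN he hr _) fun y hy => ?_
    obtain ⟨a, b, hm, rfl⟩ := hy
    have h1 : a * e (k + 1) + b ≤ g N e r (k + 1) :=
      le_g N e r hN he hr hm (k + 1) (by omega) (by omega)
    have h2 : a * e (k + 3) + b ≤ g N e r (k + 3) :=
      le_g N e r hN he hr hm (k + 3) (by omega) (by omega)
    rw [le_div_iff₀ hpos]
    have : (a * e (k + 2) + b) * (e (k + 3) - e (k + 1)) =
        (a * e (k + 1) + b) * (e (k + 3) - e (k + 2)) +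
        (a * e (k + 3) + b) * (e (k + 2) - e (k + 1)) := by ring
    rw [this]
    have := mul_le_mul_of_nonneg_right h1 (le_of_lt hd2)
    have := mul_le_mul_of_nonneg_right h2 (le_of_lt hd1)
    linarith
  have : k + 2 - 1 = k + 1 := by omega
  rw [this]
  nlinarith [key]

theorem sl_step (j : ℕ) (h1 : 1 ≤ j) (h2 : j + 1 ≤ N - 1) : sl N e r j ≤ sl N e r (j + 1) := by
  have hc := g_conv N e r hN he hr (j + 1) (by omega) (by omega)
  have hd1 : 0 < e (j + 1) - e j := by
    have := he j h1 (by omega); linarith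
  have hd2 : 0 < e (j + 2) - e (j + 1) := by
    have := he (j + 1) (by omega) (by omega); linarith
  simp only [show j + 1 - 1 = j by omega] at hc
  rw [sl, sl, div_le_div_iff₀ hd1 hd2]
  nlinarith [hc]

theorem sl_mono : ∀ i j, 1 ≤ i → i ≤ j → j ≤ N - 1 → sl N e r i ≤ sl N e r j := by
  intro i j h1 h2 h3
  induction j with
  | zero => omega
  | succ m ih =>
    rcases Nat.lt_or_ge i (m + 1) with h | h
    · exact le_trans (ih (by omega) (by omega)) (sl_step N e r hN he hr m (by omega) h3)
    · have : i = m + 1 := by omega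
      subst this; rfl

theorem g_succ (j : ℕ) (h1 : 1 ≤ j) (h2 : j < N) :
    g N e r (j + 1) = g N e r j + sl N e r j * (e (j + 1) - e j) := by
  have hd : e (j + 1) - e j ≠ 0 := by
    have := he j h1 h2; linarith
  rw [sl, div_mul_cancel₀ _ hd]
  ring

theorem chord_low : ∀ a b, 1 ≤ a → a < b → b ≤ N →
    sl N e r a * (e b - e a) ≤ g N e r b - g N e r a := by
  intro a b h1 h2 h3
  revert h3
  induction b, h2 using Nat.le_induction with
  | base =>
    intro h3
    rw [g_succ N e r hN he hr a h1 (by omega), show a.succ = a + 1 from rfl]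
    ring_nf
    exact le_refl _
  | succ b hb ih =>
    intro h3
    have ihb := ih (by omega)
    have hg := g_succ N e r hN he hr b (by omega) (by omega)
    have hsl : sl N e r a ≤ sl N e r b := sl_mono N e r hN he hr a b h1 (by omega) (by omega)
    have hd : 0 < e (b + 1) - e b := by
      have := he b (by omega) (by omega); linarith
    nlinarith [mul_le_mul_of_nonneg_right hsl (le_of_lt hd)]

theorem chord_high : ∀ a b, 1 ≤ a → a < b → b ≤ N →
    g N e r b - g N e r a ≤ sl N e r (b - 1) * (e b - e a) := by
  intro a b h1 h2 h3
  revert h3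
  induction b, h2 using Nat.le_induction with
  | base =>
    intro h3
    rw [show a + 1 - 1 = a by omega, g_succ N e r hN he hr a h1 (by omega),
      show a.succ = a + 1 from rfl]
    ring_nf
    exact le_refl _
  | succ b hb ih =>
    intro h3
    have ihb := ih (by omega)
    have hg := g_succ N e r hN he hr b (by omega) (by omega)
    have hsl : sl N e r (b - 1) ≤ sl N e r b :=
      sl_mono N e r hN he hr (b - 1) b (by omega) (by omega) (by omega)
    have hd : 0 < e (b + 1) - e b := by
      have := he b (by omega) (by omega); linarith
    have hba : 0 < e b - e a := by
      have := e_lt N e r hN he hr a b h1 (by omega) (by omega); linarith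
    rw [show b + 1 - 1 = b by omega]
    nlinarith [mul_le_mul_of_nonneg_right hsl (le_of_lt hba)]

theorem g_anti (i : ℕ) (h1 : 1 ≤ i) (h2 : i < N) : g N e r (i + 1) ≤ g N e r i := by
  by_contra hlt
  push_neg at hlt
  have hd : 0 < e (i + 1) - e i := by
    have := he i h1 h2; linarith
  have hsl : 0 < sl N e r i := div_pos (by linarith) hd
  have hcl := chord_low N e r hN he hr i N h1 h2 le_rfl
  have hde : 0 < e N - e i := by
    have := e_lt N e r hN he hr i N h1 h2 le_rfl; linarith
  have h1' := rN_le_g N e r hN he hr i h1 (by omega)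
  rw [g_N N e r hN he hr] at hcl
  nlinarith

theorem corner (j : ℕ) (h1 : 2 ≤ j) (h2 : j ≤ N - 1) (hs : sl N e r (j - 1) < sl N e r j) :
    g N e r j = r j := by
  by_contra hne
  have hlt : g N e r j < r j :=
    lt_of_le_of_ne (g_le_r N e r hN he hr j (by omega) (by omega)) hne
  set sb : ℝ := (sl N e r (j - 1) + sl N e r j) / 2 with hsb
  have hsb1 : sl N e r (j - 1) < sb := by rw [hsb]; linarith
  have hsb2 : sb < sl N e r j := by rw [hsb]; linarith
  have hne' : (Finset.Icc 1 N).Nonempty := ⟨1, by rw [Finset.mem_Icc]; omega⟩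
  set f : ℕ → ℝ := fun k => r k - (g N e r j + sb * (e k - e j)) with hf
  set m : ℝ := Finset.inf' _ hne' f with hm
  have hmino : mino N e r sb (g N e r j - sb * e j + m) := by
    intro k hk1 hk2
    have : m ≤ f k := by
      rw [hm]; exact Finset.inf'_le f (by rw [Finset.mem_Icc]; omega)
    rw [hf] at this
    simp only at this
    linarith
  have hle := le_g N e r hN he hr hmino j (by omega) (by omega)
  have hm0 : m ≤ 0 := by linarith
  obtain ⟨k0, hk0mem, hk0⟩ := Finset.exists_mem_eq_inf' hne' f
  rw [Finset.mem_Icc] at hk0mem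
  have hfk0 : r k0 ≤ g N e r j + sb * (e k0 - e j) := by
    have : f k0 ≤ 0 := by rw [hm] at hm0; rw [← hk0]; exact hm0
    rw [hf] at this; simp only at this; linarith
  have hgk0 : g N e r k0 ≤ r k0 := g_le_r N e r hN he hr k0 hk0mem.1 hk0mem.2
  rcases lt_trichotomy k0 j with h | h | h
  · have hch := chord_high N e r hN he hr k0 j hk0mem.1 h (by omega)
    have hde : 0 < e j - e k0 := by
      have := e_lt N e r hN he hr k0 j hk0mem.1 h (by omega); linarith
    nlinarith
  · subst h; linarith
  · have hcl := chord_low N e r hN he hr j k0 (by omega) h hk0mem.2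
    have hde : 0 < e k0 - e j := by
      have := e_lt N e r hN he hr j k0 (by omega) h hk0mem.2; linarith
    nlinarith

theorem cross (a k b : ℕ) (h1 : 1 ≤ a) (h2 : a < k) (h3 : k < b) (h4 : b ≤ N) :
    ev e (g N e r) a k + ev e (g N e r) k b ≤ ev e (g N e r) a b := by
  have h5 := chord_high N e r hN he hr a k h1 h2 (by omega)
  have h6 := chord_low N e r hN he hr k b (by omega) h3 h4
  have h7 : sl N e r (k - 1) ≤ sl N e r k :=
    sl_mono N e r hN he hr (k - 1) k (by omega) (by omega) (by omega)
  have hbk : 0 < e b - e k := by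
    have := e_lt N e r hN he hr k b (by omega) h3 h4; linarith
  have hka : 0 < e k - e a := by
    have := e_lt N e r hN he hr a k h1 h2 (by omega); linarith
  have H1 := mul_le_mul_of_nonneg_right h5 (le_of_lt hbk)
  have H2 := mul_le_mul_of_nonneg_right h6 (le_of_lt hka)
  have H3 := mul_le_mul_of_nonneg_right h7 (le_of_lt (mul_pos hka hbk))
  simp only [ev]
  nlinarith [H1, H2, H3]

theorem edge_ge_F : ∀ a b, 1 ≤ a → a < b → b ≤ N → F N e r a b ≤ ev e (g N e r) a b := by
  intro a b h1 h2
  induction b, h2 using Nat.le_induction with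
  | base =>
    intro h3
    rw [F, Finset.sum_Ico_succ_top (le_refl a), Finset.Ico_self, Finset.sum_empty, zero_add]
  | succ b hb ih =>
    intro h3
    have := ih (by omega)
    have hcr := cross N e r hN he hr a b (b + 1) h1 (by omega) (by omega) h3
    rw [F, Finset.sum_Ico_succ_top (by omega : a ≤ b)]
    rw [F] at this
    linarith

omit hN he hr in
theorem F_add (a k b : ℕ) (h1 : a ≤ k) (h2 : k ≤ b) :
    F N e r a k + F N e r k b = F N e r a b :=
  Finset.sum_Ico_consecutive _ h1 h2

theorem aff_g (a b : ℕ) (h1 : 1 ≤ a) (h2 : b ≤ N)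
    (hs : ∀ j, a ≤ j → j < b → sl N e r j = sl N e r a) :
    ∀ k, a ≤ k → k ≤ b → g N e r k = g N e r a + sl N e r a * (e k - e a) := by
  intro k hk1 hk2
  induction k with
  | zero =>
    have : a = 0 := by omega
    subst this; simp
  | succ m ih =>
    rcases Nat.lt_or_ge m a with h | h
    · have : a = m + 1 := by omega
      subst this; simp
    · have ihm := ih h (by omega)
      have hg := g_succ N e r hN he hr m (by omega) (by omega)
      have hsm : sl N e r m = sl N e r a := hs m h (by omega)
      rw [hg, ihm, hsm]; ring

theorem F_eq_edge (a b : ℕ) (h1 : 1 ≤ a) (h2 : a < b) (h3 : b ≤ N)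
    (hs : ∀ j, a ≤ j → j < b → sl N e r j = sl N e r a) :
    F N e r a b = ev e (g N e r) a b := by
  revert h3 hs
  induction b, h2 using Nat.le_induction with
  | base =>
    intro h3 hs
    rw [F, Finset.sum_Ico_succ_top (le_refl a), Finset.Ico_self, Finset.sum_empty, zero_add]
  | succ b hb ih =>
    intro h3 hs
    have ihb := ih (by omega) (fun j hj1 hj2 => hs j hj1 (by omega))
    have hgb : g N e r b = g N e r a + sl N e r a * (e b - e a) :=
      aff_g N e r hN he hr a (b + 1) h1 h3 hs b (by omega) (by omega)
    have hgb1 : g N e r (b + 1) = g N e r a + sl N e r a * (e (b + 1) - e a) :=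
      aff_g N e r hN he hr a (b + 1) h1 h3 hs (b + 1) (by omega) le_rfl
    rw [F, Finset.sum_Ico_succ_top (by omega : a ≤ b), ← F, ihb]
    simp only [ev]
    rw [hgb, hgb1]
    ring

theorem Vge : ∀ (l : List ℕ) (a b : ℕ), (a :: l).Chain' (· < ·) → 1 ≤ a →
    (∀ x ∈ l, x ≤ N) → (a :: l).getLast? = some b →
    F N e r a b ≤ chainValue e (g N e r) (a :: l) := by
  intro l
  induction l with
  | nil =>
    intro a b hc h1 hmem hlast
    simp only [List.getLast?_singleton, Option.some.injEq] at hlast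
    subst hlast
    rw [chainValue_single, F, Finset.Ico_self, Finset.sum_empty]
  | cons y t ih =>
    intro a b hc h1 hmem hlast
    rw [List.getLast?_cons_cons] at hlast
    have hay : a < y := (List.isChain_cons_cons.1 hc).1
    have hyc : (y :: t).Chain' (· < ·) := (List.isChain_cons_cons.1 hc).2
    have hyN : y ≤ N := hmem y (List.mem_cons_self)
    have hyb : y ≤ b := last_ge hyc hlast y (List.mem_cons_self)
    have ihy := ih y b hyc (by omega) (fun x hx => hmem x (List.mem_cons_of_mem _ hx)) hlast
    have hedge := edge_ge_F N e r hN he hr a y h1 hay hyN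
    rw [chainValue_cons]
    have hFadd := F_add N e r a y b (by omega) hyb
    linarith

theorem Vcomp : ∀ (l : List ℕ) (p : ℕ), 1 ≤ p → (p :: l).Chain' (· < ·) →
    (∀ x ∈ l, x ≤ N) → l.getLast? = some N →
    chainValue e (g N e r) (p :: l) + (r p - g N e r p) * (e p + e (l.headD 0)) ≤
      chainValue e r (p :: l) := by
  intro l
  induction l with
  | nil => intro p _ _ _ hlast; simp at hlast
  | cons y t ih =>
    intro p hp hc hmem hlast
    have hpy : p < y := (List.isChain_cons_cons.1 hc).1
    have hyc : (y :: t).Chain' (· < ·) := (List.isChain_cons_cons.1 hc).2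
    have hyN : y ≤ N := hmem y (List.mem_cons_self)
    cases t with
    | nil =>
      simp only [List.getLast?_singleton, Option.some.injEq] at hlast
      rw [hlast]
      simp only [List.headD_cons]
      rw [chainValue_cons, chainValue_cons, chainValue_single, chainValue_single]
      simp only [ev]
      rw [g_N N e r hN he hr]
      ring_nf
      exact le_refl _
    | cons z t' =>
      rw [List.getLast?_cons_cons] at hlast
      have ihy := ih y (by omega) hyc
        (fun x hx => hmem x (List.mem_cons_of_mem _ hx)) hlast
      simp only [List.headD_cons] at ihy ⊢
      rw [chainValue_cons, chainValue_cons e r p y]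
      have hgy : g N e r y ≤ r y := g_le_r N e r hN he hr y (by omega) hyN
      have hpz : e p < e z := by
        have hyz : y < z := (List.isChain_cons_cons.1 hyc).1
        have hzN : z ≤ N := hmem z (by simp)
        exact e_lt N e r hN he hr p z hp (by omega) hzN
      have hprod : 0 ≤ (r y - g N e r y) * (e z - e p) :=
        mul_nonneg (by linarith) (by linarith)
      simp only [ev]
      nlinarith [ihy]

omit hN he hr in
theorem fseg_head (a n : ℕ) : (fseg a n).head? = some a := by
  cases n <;> rfl

omit hN he hr in
theorem fseg_last : ∀ n a, (fseg a n).getLast? = some (a + n) := by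
  intro n
  induction n with
  | zero => intro a; rfl
  | succ m ih =>
    intro a
    show (a :: fseg (a + 1) m).getLast? = some (a + (m + 1))
    cases m with
    | zero => rfl
    | succ k =>
      rw [show fseg (a + 1) (k + 1) = (a + 1) :: fseg (a + 2) k from rfl,
        List.getLast?_cons_cons,
        ← show fseg (a + 1) (k + 1) = (a + 1) :: fseg (a + 2) k from rfl, ih (a + 1)]
      congr 1
      omega

omit hN he hr in
theorem fseg_chain : ∀ n a, (fseg a n).Chain' (· < ·) := by
  intro n
  induction n with
  | zero => intro a; simp [fseg, List.Chain']
  | succ m ih =>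
    intro a
    show (a :: fseg (a + 1) m).Chain' (· < ·)
    unfold List.Chain'
    rw [List.isChain_cons]
    refine ⟨fun y hy => ?_, ih (a + 1)⟩
    rw [fseg_head] at hy
    simp only [Option.mem_def, Option.some.injEq] at hy
    omega

theorem fseg_V : ∀ n a, 1 ≤ a → a + n ≤ N →
    chainValue e (g N e r) (fseg a n) = F N e r a (a + n) := by
  intro n
  induction n with
  | zero =>
    intro a h1 h2
    show chainValue e (g N e r) [a] = _
    rw [chainValue_single, F, Nat.add_zero, Finset.Ico_self, Finset.sum_empty]
  | succ m ih =>
    intro a h1 h2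
    show chainValue e (g N e r) (a :: fseg (a + 1) m) = _
    rw [chainValue_cons_head e _ a _ (a + 1) (fseg_head (a + 1) m), ih (a + 1) (by omega) (by omega)]
    have hev : F N e r a (a + 1) = ev e (g N e r) a (a + 1) := by
      rw [F, Finset.sum_Ico_succ_top (le_refl a), Finset.Ico_self, Finset.sum_empty, zero_add]
    have hFadd := F_add N e r a (a + 1) (a + (m + 1)) (by omega) (by omega)
    rw [show a + 1 + m = a + (m + 1) by omega]
    linarith

theorem touch_chain : ∀ (n a b : ℕ), b - a ≤ n → 1 ≤ a → a < b → b ≤ N →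
    g N e r a = r a → g N e r b = r b →
    ∃ l : List ℕ, l.Chain' (· < ·) ∧ l.head? = some a ∧ l.getLast? = some b ∧
      chainValue e r l = F N e r a b := by
  intro n
  induction n with
  | zero => intro a b h0 h1 h2 h3 _ _; omega
  | succ n ih =>
    intro a b h0 h1 h2 h3 hga hgb
    by_cases hcor : ∃ k, a < k ∧ k < b ∧ sl N e r (k - 1) < sl N e r k
    · obtain ⟨k, hk1, hk2, hk3⟩ := hcor
      have hgk : g N e r k = r k :=
        corner N e r hN he hr k (by omega) (by omega) hk3
      obtain ⟨l₁, hc₁, hh₁, hl₁, hv₁⟩ := ih a k (by omega) h1 hk1 (by omega) hga hgk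
      obtain ⟨l₂, hc₂, hh₂, hl₂, hv₂⟩ := ih k b (by omega) (by omega) hk2 h3 hgk hgb
      cases l₂ with
      | nil => simp at hh₂
      | cons y t =>
        simp only [List.head?_cons, Option.some.injEq] at hh₂
        subst hh₂
        cases t with
        | nil =>
          simp only [List.getLast?_singleton, Option.some.injEq] at hl₂
          omega
        | cons z t' =>
          rw [List.getLast?_cons_cons] at hl₂
          have hkz : y < z := (List.isChain_cons_cons.1 hc₂).1
          have hct : (z :: t').Chain' (· < ·) := (List.isChain_cons_cons.1 hc₂).2
          refine ⟨l₁ ++ z :: t', ?_, ?_, ?_, ?_⟩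
          · refine List.IsChain.append hc₁ hct fun x hx yy hyy => ?_
            rw [hl₁] at hx
            simp only [Option.mem_def, Option.some.injEq] at hx hyy
            simp only [List.head?_cons, Option.some.injEq] at hyy
            omega
          · cases l₁ with
            | nil => simp at hh₁
            | cons w t₁ =>
              simp only [List.head?_cons, Option.some.injEq] at hh₁
              simp [hh₁]
          · rw [List.getLast?_append_cons]
            exact hl₂
          · rw [V_append e r l₁ y (z :: t') hl₁, hv₁, hv₂,
              F_add N e r a y b (by omega) (by omega)]
    · push_neg at hcor
      have hs : ∀ j, a ≤ j → j < b → sl N e r j = sl N e r a := by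
        intro j hj1 hj2
        induction j with
        | zero =>
          have : a = 0 := by omega
          rw [this]
        | succ m ihm =>
          rcases Nat.lt_or_ge m a with h | h
          · have : a = m + 1 := by omega
            rw [this]
          · have h1m : sl N e r m = sl N e r a := ihm h (by omega)
            have h2m : sl N e r (m + 1) ≤ sl N e r m := by
              have := hcor (m + 1) (by omega) hj2
              simpa using this
            have h3m : sl N e r a ≤ sl N e r (m + 1) :=
              sl_mono N e r hN he hr a (m + 1) h1 (by omega) (by omega)
            linarith
      refine ⟨[a, b], ?_, rfl, rfl, ?_⟩
      · simp [List.Chain', List.isChain_cons_cons]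
        omega
      · rw [chainValue_cons, chainValue_single, add_zero,
          F_eq_edge N e r hN he hr a b h1 h2 h3 hs]
        simp only [ev]
        rw [hga, hgb]

end Hull

end Stmt3

/-- Let `N ≥ 2`, `e₁ < e₂ < … < e_N` and `r₁ ≥ r₂ ≥ … ≥ r_N`.
Then there exist `r'₁ ≥ … ≥ r'_N` with `r'₁ = r₁`, `r'_N = r_N`, `r'_j ≤ r_j`
for all `j`, satisfying the convexity condition
`(r'_i − r'_{i+1})(e_i − e_{i−1}) ≤ (r'_{i−1} − r'_i)(e_{i+1} − e_i)` for
`2 ≤ i ≤ N − 1`, and with `S(e, r') = S(e, r)`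
(moving the points onto their Newton polygon). -/
theorem stmt3 (N : ℕ) (e r : ℕ → ℝ) (hN : 2 ≤ N)
    (hemono : ∀ i, 1 ≤ i → i < N → e i < e (i + 1))
    (hr : ∀ i, 1 ≤ i → i < N → r (i + 1) ≤ r i) :
    ∃ r' : ℕ → ℝ,
      (∀ i, 1 ≤ i → i < N → r' (i + 1) ≤ r' i) ∧
      r' 1 = r 1 ∧ r' N = r N ∧
      (∀ j, 1 ≤ j → j ≤ N → r' j ≤ r j) ∧
      (∀ i, 2 ≤ i → i ≤ N - 1 →
        (r' i - r' (i + 1)) * (e i - e (i - 1)) ≤ (r' (i - 1) - r' i) * (e (i + 1) - e i)) ∧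
      Smin e r' N = Smin e r N := by
  refine ⟨Stmt3.g N e r, fun i h1 h2 => Stmt3.g_anti N e r hN hemono hr i h1 h2,
    Stmt3.g_one N e r hN hemono hr, Stmt3.g_N N e r hN hemono hr,
    fun j h1 h2 => Stmt3.g_le_r N e r hN hemono hr j h1 h2,
    fun i h1 h2 => Stmt3.g_conv N e r hN hemono hr i h1 h2, ?_⟩
  -- facts about arbitrary chains
  have key : ∀ l, IsChainIdx N l →
      Stmt3.F N e r 1 N ≤ chainValue e (Stmt3.g N e r) l ∧
      chainValue e (Stmt3.g N e r) l ≤ chainValue e r l := by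
    rintro l ⟨hc, hh, htl⟩
    cases l with
    | nil => simp at hh
    | cons x t =>
      simp only [List.head?_cons, Option.some.injEq] at hh
      subst hh
      have hmem : ∀ z ∈ t, z ≤ N := fun z hz =>
        Stmt3.last_ge hc htl z (List.mem_cons_of_mem _ hz)
      constructor
      · exact Stmt3.Vge N e r hN hemono hr t 1 N hc (le_refl 1) hmem htl
      · cases t with
        | nil =>
          simp only [List.getLast?_singleton, Option.some.injEq] at htl
          omega
        | cons u t' =>
          rw [List.getLast?_cons_cons] at htl
          have hcomp := Stmt3.Vcomp N e r hN hemono hr (u :: t') 1 (le_refl 1) hc hmem htl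
          rw [Stmt3.g_one N e r hN hemono hr] at hcomp
          simp only [sub_self, zero_mul, add_zero] at hcomp
          exact hcomp
  -- the full chain
  have hL0 : IsChainIdx N (Stmt3.fseg 1 (N - 1)) := by
    refine ⟨Stmt3.fseg_chain (N - 1) 1, Stmt3.fseg_head 1 (N - 1), ?_⟩
    rw [Stmt3.fseg_last]
    congr 1
    omega
  have hL0v : chainValue e (Stmt3.g N e r) (Stmt3.fseg 1 (N - 1)) = Stmt3.F N e r 1 N := by
    rw [Stmt3.fseg_V N e r hN hemono hr (N - 1) 1 (le_refl 1) (by omega)]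
    congr 1
    omega
  -- the touching chain
  obtain ⟨H, hHc, hHh, hHl, hHv⟩ := Stmt3.touch_chain N e r hN hemono hr N 1 N (by omega)
    (le_refl 1) (by omega) (le_refl N) (Stmt3.g_one N e r hN hemono hr)
    (Stmt3.g_N N e r hN hemono hr)
  have hH : IsChainIdx N H := ⟨hHc, hHh, hHl⟩
  -- compute both infima
  have hlbg : ∀ y ∈ chainValue e (Stmt3.g N e r) '' {l | IsChainIdx N l},
      Stmt3.F N e r 1 N ≤ y := by
    rintro y ⟨l, hl, rfl⟩
    exact (key l hl).1
  have hlbr : ∀ y ∈ chainValue e r '' {l | IsChainIdx N l}, Stmt3.F N e r 1 N ≤ y := by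
    rintro y ⟨l, hl, rfl⟩
    exact le_trans (key l hl).1 (key l hl).2
  have h1 : Smin e (Stmt3.g N e r) N = Stmt3.F N e r 1 N := by
    refine le_antisymm (csInf_le ⟨_, hlbg⟩ ⟨_, hL0, hL0v⟩) (le_csInf ⟨_, ⟨_, hL0, rfl⟩⟩ hlbg)
  have h2 : Smin e r N = Stmt3.F N e r 1 N := by
    refine le_antisymm (csInf_le ⟨_, hlbr⟩ ⟨H, hH, hHv⟩) (le_csInf ⟨_, ⟨H, hH, rfl⟩⟩ hlbr)
  rw [h1, h2]
end

section
/- Let N, s, t be integers with 1 ≤ s < t ≤ N, and let e_1, …, e_N be real numbers with e_1 = 0, e_s = e_{s+1} = … = e_{t−1}, and e_{j−1} < e_j for every j in J = {2, …, s} ∪ {t, …, N}. Let σ_2, …, σ_N be real numbers with σ_j ≥ 0 for all j, σ_j = 0 for s+1 ≤ j ≤ t−1, such that the ratios σ_j/(e_j − e_{j−1}) are nonincreasing along J (equivalently, σ_j (e_{j'} − e_{j'−1}) ≥ σ_{j'} (e_j − e_{j−1}) whenever j < j' are consecutive elements of J), and such that Σ_{j=2}^{s} (j−1) σ_j + Σ_{j=t}^{N}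 (j−t+s) σ_j = 1. Then Σ_{j∈J} σ_j (e_{j−1} + e_j) ≤ B(s,t). -/
open Finset

lemma tele_aux (f : ℕ → ℝ) (a : ℕ) :
    ∀ i, a ≤ i → ∑ j ∈ Icc (a+1) i, (f j - f (j-1)) = f i - f a := by
  intro i hi
  induction i, hi using Nat.le_induction with
  | base => simp
  | succ n hn ih =>
    rw [Finset.sum_Icc_succ_top (by omega), ih]
    simp

lemma abel_aux (f : ℕ → ℝ) (c : ℝ) (a : ℕ) :
    ∀ i, a + 1 ≤ i → ∑ j ∈ Icc (a+1) i, ((j:ℝ) - c) * (f j - f (j-1))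
      = ((i:ℝ) - c) * f i - ((a:ℝ) + 1 - c) * f a - ∑ j ∈ Icc (a+1) (i-1), f j := by
  intro i hi
  induction i, hi using Nat.le_induction with
  | base =>
    have h2 : Icc (a+1) (a+1-1) = ∅ := by rw [Finset.Icc_eq_empty]; omega
    rw [h2, Finset.Icc_self]
    simp
    ring
  | succ n hn ih =>
    rw [Finset.sum_Icc_succ_top (by omega), ih]
    have h1 : (n+1) - 1 = n := by omega
    rw [h1]
    rw [show Icc (a+1) n = Icc (a+1) (n-1) ∪ {n} by
        rw [Finset.union_comm]; ext x; simp [Finset.mem_Icc]; omega,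
      Finset.sum_union (by simp [Finset.disjoint_left]; omega)]
    simp
    ring

lemma abel_nonpos (J : Finset ℕ) : ∀ (r h : ℕ → ℝ),
    (∀ j ∈ J, 0 ≤ r j) →
    (∀ j ∈ J, ∀ j' ∈ J, j ≤ j' → r j' ≤ r j) →
    (∀ i ∈ J, ∑ j ∈ J.filter (· ≤ i), h j ≤ 0) →
    ∑ j ∈ J, r j * h j ≤ 0 := by
  induction J using Finset.strongInduction with
  | _ J ih =>
    intro r h hr0 hrmono hH
    rcases J.eq_empty_or_nonempty with rfl | hne
    · simp
    · set m := J.max' hne with hm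
      have hmJ : m ∈ J := J.max'_mem hne
      have hJm : ∀ j ∈ J, j ≤ m := fun j hj => J.le_max' j hj
      have hfilter : J.filter (· ≤ m) = J :=
        Finset.filter_true_of_mem (fun x hx => hJm x hx)
      have key : ∑ j ∈ J, r j * h j
          = (∑ j ∈ J.erase m, (r j - r m) * h j) + r m * ∑ j ∈ J, h j := by
        rw [Finset.mul_sum, ← Finset.sum_erase_add _ _ hmJ,
          ← Finset.sum_erase_add _ (fun j => r m * h j) hmJ]
        simp only [sub_mul]
        rw [Finset.sum_sub_distrib]
        ring
      rw [key]
      have h1 : ∑ j ∈ J.erase m, (r j - r m) * h j ≤ 0 := by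
        apply ih (J.erase m) (Finset.erase_ssubset hmJ)
        · intro j hj
          have := Finset.mem_of_mem_erase hj
          have := hrmono j this m hmJ (hJm j this)
          linarith
        · intro j hj j' hj' hle
          have hj1 := Finset.mem_of_mem_erase hj
          have hj'1 := Finset.mem_of_mem_erase hj'
          have := hrmono j hj1 j' hj'1 hle
          linarith
        · intro i hi
          have hi1 := Finset.mem_of_mem_erase hi
          have him : i < m := lt_of_le_of_ne (hJm i hi1) (Finset.ne_of_mem_erase hi)
          have : (J.erase m).filter (· ≤ i) = J.filter (· ≤ i) := by
            ext x
            simp only [Finset.mem_filter, Finset.mem_erase]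
            constructor
            · rintro ⟨⟨_, hx⟩, hxi⟩; exact ⟨hx, hxi⟩
            · rintro ⟨hx, hxi⟩; exact ⟨⟨by omega, hx⟩, hxi⟩
          rw [this]
          exact hH i hi1
      have h2 : r m * ∑ j ∈ J, h j ≤ 0 := by
        have := hH m hmJ
        rw [hfilter] at this
        exact mul_nonpos_of_nonneg_of_nonpos (hr0 m hmJ) this
      linarith


/-- The quantity `B_i`: for `2 ≤ i ≤ s`, `B_i = e_i² / ((i−1)e_i − Σ_{j=2}^{i−1} e_j)`;
for `t ≤ i ≤ N`, `B_i = e_i² / ((i−t+s)e_i − (e_1 + … + e_s + e_t + … + e_{i−1}))`. -/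
noncomputable def Bcoef (e : ℕ → ℝ) (s t i : ℕ) : ℝ :=
  if i ≤ s then
    (e i) ^ 2 / (((i : ℝ) - 1) * e i - ∑ j ∈ Finset.Icc 2 (i - 1), e j)
  else
    (e i) ^ 2 /
      (((i : ℝ) - t + s) * e i -
        (∑ j ∈ Finset.Icc 1 s, e j + ∑ j ∈ Finset.Icc t (i - 1), e j))

/-- `B(s,t)`: the maximum of the `B_i` over `i ∈ {2,…,s} ∪ {t,…,N}`. -/
noncomputable def Bmax (e : ℕ → ℝ) (s t N : ℕ) : ℝ :=
  sSup (Bcoef e s t '' (Set.Icc 2 s ∪ Set.Icc t N))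

/-- Let `1 ≤ s < t ≤ N`, `e₁ = 0`, `e_s = … = e_{t−1}` and
`e_{j−1} < e_j` for all `j ∈ J = {2,…,s} ∪ {t,…,N}`. Let `σ_j ≥ 0` on `J`,
`σ_j = 0` for `s+1 ≤ j ≤ t−1`, with the ratios `σ_j/(e_j − e_{j−1})`
nonincreasing along `J` and normalized by
`Σ_{j=2}^{s} (j−1)σ_j + Σ_{j=t}^{N} (j−t+s)σ_j = 1`. Then
`Σ_{j∈J} σ_j (e_{j−1} + e_j) ≤ B(s,t)`. -/
theorem stmt5 (N s t : ℕ) (e σ : ℕ → ℝ)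
    (hs : 1 ≤ s) (hst : s < t) (htN : t ≤ N)
    (he1 : e 1 = 0)
    (heconst : ∀ i, s ≤ i → i ≤ t - 1 → e i = e s)
    (hestrict : ∀ j ∈ Icc 2 s ∪ Icc t N, e (j - 1) < e j)
    (hσnonneg : ∀ j ∈ Icc 2 s ∪ Icc t N, 0 ≤ σ j)
    (hσzero : ∀ j, s + 1 ≤ j → j ≤ t - 1 → σ j = 0)
    (hratio : ∀ j ∈ Icc 2 s ∪ Icc t N, ∀ j' ∈ Icc 2 s ∪ Icc t N, j < j' →
      σ j' * (e j - e (j - 1)) ≤ σ j * (e j' - e (j' - 1)))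
    (hnorm : (∑ j ∈ Icc 2 s, ((j : ℝ) - 1) * σ j) +
        ∑ j ∈ Icc t N, ((j : ℝ) - t + s) * σ j = 1) :
    ∑ j ∈ Icc 2 s ∪ Icc t N, σ j * (e (j - 1) + e j) ≤ Bmax e s t N := by
  set J : Finset ℕ := Icc 2 s ∪ Icc t N with hJ
  set B := Bmax e s t N with hB
  have hmemJ : ∀ j, j ∈ J ↔ (2 ≤ j ∧ j ≤ s) ∨ (t ≤ j ∧ j ≤ N) := by
    intro j; simp [hJ, Finset.mem_union, Finset.mem_Icc]
  have hd : ∀ j ∈ J, 0 < e j - e (j-1) := fun j hj => sub_pos.2 (hestrict j hj)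
  have hets : e (t-1) = e s := heconst (t-1) (by omega) le_rfl
  set w : ℕ → ℝ := fun j => if j ≤ s then (j:ℝ) - 1 else (j:ℝ) - t + s with hw
  set D : ℕ → ℝ := fun i => if i ≤ s then
      ((i : ℝ) - 1) * e i - ∑ j ∈ Finset.Icc 2 (i - 1), e j
    else
      ((i : ℝ) - t + s) * e i -
        (∑ j ∈ Finset.Icc 1 s, e j + ∑ j ∈ Finset.Icc t (i - 1), e j) with hD
  -- filter descriptions
  have hfil1 : ∀ i, 2 ≤ i → i ≤ s → J.filter (· ≤ i) = Icc 2 i := by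
    intro i h2 hisle
    ext x
    simp only [Finset.mem_filter, hmemJ, Finset.mem_Icc, decide_eq_true_eq]
    omega
  have hfil2 : ∀ i, t ≤ i → i ≤ N → J.filter (· ≤ i) = Icc 2 s ∪ Icc t i := by
    intro i hti hiN
    ext x
    simp only [Finset.mem_filter, hmemJ, Finset.mem_union, Finset.mem_Icc,
      decide_eq_true_eq]
    omega
  have hdisj2 : ∀ i : ℕ, Disjoint (Icc 2 s) (Icc t i) := by
    intro i
    simp only [Finset.disjoint_left, Finset.mem_Icc]
    omega
  -- first-block Abel identity
  have hablock : ∑ j ∈ Icc 2 s, ((j:ℝ) - 1) * (e j - e (j-1))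
      = ((s:ℝ) - 1) * e s - ∑ j ∈ Icc 2 (s-1), e j := by
    rcases Nat.eq_or_lt_of_le hs with rfl | hs2
    · simp
    · have := abel_aux e 1 1 s (by omega)
      norm_num at this
      rw [this, he1]
      ring
  have htele1 : ∑ j ∈ Icc 2 s, (e j ^ 2 - e (j-1) ^ 2) = e s ^ 2 := by
    have := tele_aux (fun n => e n ^ 2) 1 s hs
    rw [this]
    show e s ^ 2 - e 1 ^ 2 = e s ^ 2
    rw [he1]
    ring
  -- sum of weights equals the denominator
  have hsum1s : ∑ j ∈ Icc 1 s, e j = (∑ j ∈ Icc 2 (s-1), e j) + e s := by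
    rcases Nat.eq_or_lt_of_le hs with rfl | hs2
    · simp [he1]
    · rw [show Icc 1 s = {1} ∪ (Icc 2 (s-1) ∪ {s}) by
        ext x; simp [Finset.mem_Icc]; omega,
        Finset.sum_union (by simp [Finset.disjoint_left, Finset.mem_Icc]; omega),
        Finset.sum_union (by simp [Finset.disjoint_left, Finset.mem_Icc]; omega)]
      simp [he1]
  have hG : ∀ i ∈ J, ∑ j ∈ J.filter (· ≤ i), w j * (e j - e (j-1)) = D i := by
    intro i hi
    rcases (hmemJ i).1 hi with ⟨h2, hisle⟩ | ⟨hti, hiN⟩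
    · rw [hfil1 i h2 hisle]
      have hcong : ∑ j ∈ Icc 2 i, w j * (e j - e (j-1))
          = ∑ j ∈ Icc 2 i, ((j:ℝ) - 1) * (e j - e (j-1)) := by
        apply Finset.sum_congr rfl
        intro x hx
        rw [Finset.mem_Icc] at hx
        have : x ≤ s := le_trans hx.2 hisle
        simp [hw, this]
      rw [hcong]
      have := abel_aux e 1 1 i (by omega)
      norm_num at this
      have hDi : D i = ((i:ℝ) - 1) * e i - ∑ j ∈ Icc 2 (i-1), e j := by
        simp only [hD, if_pos hisle]
      rw [this, he1, hDi]
      ring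
    · rw [hfil2 i hti hiN, Finset.sum_union (hdisj2 i)]
      have hc1 : ∑ j ∈ Icc 2 s, w j * (e j - e (j-1))
          = ∑ j ∈ Icc 2 s, ((j:ℝ) - 1) * (e j - e (j-1)) := by
        apply Finset.sum_congr rfl
        intro x hx
        rw [Finset.mem_Icc] at hx
        simp [hw, hx.2]
      have hc2 : ∑ j ∈ Icc t i, w j * (e j - e (j-1))
          = ∑ j ∈ Icc t i, ((j:ℝ) - ((t:ℝ) - s)) * (e j - e (j-1)) := by
        apply Finset.sum_congr rfl
        intro x hx
        rw [Finset.mem_Icc] at hx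
        have : ¬ x ≤ s := by omega
        simp only [hw, if_neg this]
        ring
      rw [hc1, hc2, hablock]
      have h2 := abel_aux e ((t:ℝ) - s) (t-1) i (by omega)
      rw [show t - 1 + 1 = t by omega] at h2
      have hcast : ((t - 1 : ℕ) : ℝ) = (t:ℝ) - 1 := by
        push_cast [Nat.cast_sub (by omega : 1 ≤ t)]; ring
      rw [hcast] at h2
      rw [h2, hets, hD]
      have hnis : ¬ i ≤ s := by omega
      simp only [if_neg hnis]
      rw [hsum1s]
      ring
  have hF : ∀ i ∈ J, ∑ j ∈ J.filter (· ≤ i), (e j ^ 2 - e (j-1) ^ 2) = e i ^ 2 := by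
    intro i hi
    rcases (hmemJ i).1 hi with ⟨h2, hisle⟩ | ⟨hti, hiN⟩
    · rw [hfil1 i h2 hisle]
      have := tele_aux (fun n => e n ^ 2) 1 i (by omega)
      rw [this]
      show e i ^ 2 - e 1 ^ 2 = e i ^ 2
      rw [he1]
      ring
    · rw [hfil2 i hti hiN, Finset.sum_union (hdisj2 i), htele1]
      have := tele_aux (fun n => e n ^ 2) (t-1) i (by omega)
      rw [show t - 1 + 1 = t by omega] at this
      rw [this]
      show e s ^ 2 + (e i ^ 2 - e (t-1) ^ 2) = e i ^ 2
      rw [hets]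
      ring
  -- weights are positive on J
  have hwpos : ∀ j ∈ J, 0 < w j := by
    intro j hj
    rcases (hmemJ j).1 hj with ⟨h2, hjs⟩ | ⟨htj, hjN⟩
    · simp only [hw, if_pos hjs]
      have : (2:ℝ) ≤ (j:ℝ) := by exact_mod_cast h2
      linarith
    · have hnjs : ¬ j ≤ s := by omega
      simp only [hw, if_neg hnjs]
      have h1 : (t:ℝ) ≤ (j:ℝ) := by exact_mod_cast htj
      have h2 : (1:ℝ) ≤ (s:ℝ) := by exact_mod_cast hs
      linarith
  have hDpos : ∀ i ∈ J, 0 < D i := by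
    intro i hi
    rw [← hG i hi]
    apply Finset.sum_pos
    · intro j hj
      rw [Finset.mem_filter] at hj
      exact mul_pos (hwpos j hj.1) (hd j hj.1)
    · exact ⟨i, Finset.mem_filter.2 ⟨hi, by simp⟩⟩
  have hBcoefD : ∀ i, Bcoef e s t i = e i ^ 2 / D i := by
    intro i
    rcases le_or_gt i s with h | h
    · simp [Bcoef, hD, h]
    · simp [Bcoef, hD, not_le.2 h]
  have hBle : ∀ i ∈ J, Bcoef e s t i ≤ B := by
    intro i hi
    have hfin : ((Set.Icc 2 s ∪ Set.Icc t N) : Set ℕ).Finite :=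
      (Set.finite_Icc _ _).union (Set.finite_Icc _ _)
    apply le_csSup ((hfin.image _).bddAbove)
    apply Set.mem_image_of_mem
    rcases (hmemJ i).1 hi with ⟨h2, hisle⟩ | ⟨hti, hiN⟩
    · exact Or.inl ⟨h2, hisle⟩
    · exact Or.inr ⟨hti, hiN⟩
  have hkey : ∀ i ∈ J, e i ^ 2 ≤ B * D i := by
    intro i hi
    have hDp := hDpos i hi
    have : e i ^ 2 = (e i ^ 2 / D i) * D i := by
      field_simp
    rw [this, ← hBcoefD i]
    exact mul_le_mul_of_nonneg_right (hBle i hi) (le_of_lt hDp)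
  -- apply the Abel nonpositivity lemma
  set r : ℕ → ℝ := fun j => σ j / (e j - e (j-1)) with hr
  set h : ℕ → ℝ := fun j => (e j ^ 2 - e (j-1) ^ 2) - B * (w j * (e j - e (j-1)))
    with hh
  have habel : ∑ j ∈ J, r j * h j ≤ 0 := by
    apply abel_nonpos J r h
    · intro j hj
      exact div_nonneg (hσnonneg j hj) (le_of_lt (hd j hj))
    · intro j hj j' hj' hle
      rcases Nat.eq_or_lt_of_le hle with rfl | hlt
      · exact le_refl _
      · have := hratio j hj j' hj' hlt
        rw [hr]
        rw [div_le_div_iff₀ (hd j' hj') (hd j hj)]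
        linarith [this]
    · intro i hi
      have : ∑ j ∈ J.filter (· ≤ i), h j
          = (∑ j ∈ J.filter (· ≤ i), (e j ^ 2 - e (j-1) ^ 2))
            - B * ∑ j ∈ J.filter (· ≤ i), w j * (e j - e (j-1)) := by
        rw [Finset.mul_sum, ← Finset.sum_sub_distrib]
      rw [this, hF i hi, hG i hi]
      linarith [hkey i hi]
  -- rewrite the sum
  have hterm : ∀ j ∈ J, r j * h j = σ j * (e (j-1) + e j) - B * (w j * σ j) := by
    intro j hj
    have hdne : e j - e (j-1) ≠ 0 := ne_of_gt (hd j hj)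
    rw [hr, hh]
    field_simp
    ring
  have hsum : ∑ j ∈ J, r j * h j
      = (∑ j ∈ J, σ j * (e (j-1) + e j)) - B * ∑ j ∈ J, w j * σ j := by
    rw [Finset.mul_sum, ← Finset.sum_sub_distrib]
    exact Finset.sum_congr rfl hterm
  have hnorm' : ∑ j ∈ J, w j * σ j = 1 := by
    have hdisj : Disjoint (Icc 2 s) (Icc t N) := by
      simp only [Finset.disjoint_left, Finset.mem_Icc]
      omega
    rw [hJ, Finset.sum_union hdisj]
    rw [← hnorm]
    congr 1
    · apply Finset.sum_congr rfl
      intro x hx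
      rw [Finset.mem_Icc] at hx
      simp [hw, hx.2]
    · apply Finset.sum_congr rfl
      intro x hx
      rw [Finset.mem_Icc] at hx
      have : ¬ x ≤ s := by omega
      simp [hw, this]
  rw [hsum, hnorm'] at habel
  linarith
end

section
/- Let N, s, t be integers with 2 ≤ s < t ≤ N, and let e_1, …, e_N be real numbers with e_1 = 0 and 0 < e_2 ≤ e_3 ≤ … ≤ e_N. Fix i with 2 ≤ i ≤ s, let α = ((i−1) e_i − Σ_{j=2}^{i−1} e_j)^{−1} (the denominator being positive), and define σ_j = α (e_j − e_{j−1}) for 2 ≤ j ≤ i and σ_j = 0 for i < j ≤ N. Then Σ_{j=2}^{s} (j−1) σ_j + Σ_{j=t}^{N} (j−t+s) σ_j = 1, and Σ_{j=2}^{N} σ_j (e_{j−1} + e_j) = α e_i² = B_i. -/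
open Finset

lemma tele1 (e : ℕ → ℝ) : ∀ i : ℕ, 2 ≤ i →
    ∑ j ∈ Icc 2 i, ((j:ℝ)-1)*(e j - e (j-1)) =
      ((i:ℝ)-1)*e i - e 1 - ∑ j ∈ Icc 2 (i-1), e j := by
  intro i hi
  induction i with
  | zero => omega
  | succ n ih =>
    rcases Nat.lt_or_ge n 2 with h | h
    · have hn : n = 1 := by omega
      subst hn
      norm_num [Finset.sum_Icc_succ_top]
    · have h1 := ih h
      rw [Finset.sum_Icc_succ_top (by omega : 2 ≤ n+1), h1]
      have h2 : n + 1 - 1 = (n-1) + 1 := by omega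
      rw [h2, Finset.sum_Icc_succ_top (by omega : 2 ≤ (n-1)+1)]
      have h3 : (n-1)+1 = n := by omega
      rw [h3]
      push_cast
      ring

lemma tele2 (e : ℕ → ℝ) : ∀ i : ℕ, 2 ≤ i →
    ∑ j ∈ Icc 2 i, (e j - e (j-1))*(e (j-1) + e j) = e i ^ 2 - e 1 ^ 2 := by
  intro i hi
  induction i with
  | zero => omega
  | succ n ih =>
    rcases Nat.lt_or_ge n 2 with h | h
    · have hn : n = 1 := by omega
      subst hn
      norm_num
      ring
    · rw [Finset.sum_Icc_succ_top (by omega : 2 ≤ n+1), ih h]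
      have h3 : n + 1 - 1 = n := by omega
      rw [h3]
      ring

lemma monoe (e : ℕ → ℝ) (N : ℕ) (h : ∀ j, 2 ≤ j → j < N → e j ≤ e (j+1)) :
    ∀ a b, 2 ≤ a → a ≤ b → b ≤ N → e a ≤ e b := by
  intro a b ha hab hbN
  induction b with
  | zero => omega
  | succ n ih =>
    rcases Nat.lt_or_ge a (n+1) with hlt | hge
    · exact (ih (by omega) (by omega)).trans (h n (by omega) (by omega))
    · have : a = n+1 := by omega
      rw [this]

/-- Let `2 ≤ s < t ≤ N`, `e₁ = 0` and `0 < e₂ ≤ e₃ ≤ … ≤ e_N`.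
Fix `2 ≤ i ≤ s`, let `α = ((i−1)e_i − Σ_{j=2}^{i−1} e_j)⁻¹` (the denominator
being positive) and set `σ_j = α(e_j − e_{j−1})` for `2 ≤ j ≤ i`, `σ_j = 0` for
`i < j ≤ N`. Then `Σ_{j=2}^{s} (j−1)σ_j + Σ_{j=t}^{N} (j−t+s)σ_j = 1` and
`Σ_{j=2}^{N} σ_j (e_{j−1} + e_j) = α e_i² = B_i`. -/
theorem stmt6 (N s t i : ℕ) (e σ : ℕ → ℝ)
    (hs : 2 ≤ s) (hst : s < t) (htN : t ≤ N)
    (he1 : e 1 = 0) (he2 : 0 < e 2)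
    (hemono : ∀ j, 2 ≤ j → j < N → e j ≤ e (j + 1))
    (hi2 : 2 ≤ i) (his : i ≤ s)
    (hσ : ∀ j, 2 ≤ j → j ≤ i →
      σ j = (((i : ℝ) - 1) * e i - ∑ k ∈ Icc 2 (i - 1), e k)⁻¹ * (e j - e (j - 1)))
    (hσzero : ∀ j, i < j → j ≤ N → σ j = 0) :
    0 < ((i : ℝ) - 1) * e i - ∑ k ∈ Icc 2 (i - 1), e k ∧
    (∑ j ∈ Icc 2 s, ((j : ℝ) - 1) * σ j) +
        ∑ j ∈ Icc t N, ((j : ℝ) - t + s) * σ j = 1 ∧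
    ∑ j ∈ Icc 2 N, σ j * (e (j - 1) + e j) =
      (((i : ℝ) - 1) * e i - ∑ k ∈ Icc 2 (i - 1), e k)⁻¹ * (e i) ^ 2 ∧
    (((i : ℝ) - 1) * e i - ∑ k ∈ Icc 2 (i - 1), e k)⁻¹ * (e i) ^ 2 = Bcoef e s t i := by
  have hiN : i ≤ N := by omega
  have hmono := monoe e N hemono
  have heipos : 0 < e i := he2.trans_le (hmono 2 i le_rfl hi2 hiN)
  -- denominator positive
  have hsumle : ∑ j ∈ Icc 2 (i-1), e j ≤ ((i:ℝ) - 2) * e i := by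
    calc ∑ j ∈ Icc 2 (i-1), e j ≤ ∑ j ∈ Icc 2 (i-1), e i := by
          refine Finset.sum_le_sum fun j hj => ?_
          simp only [Finset.mem_Icc] at hj
          exact hmono j i hj.1 (by omega) hiN
      _ = ((i:ℝ) - 2) * e i := by
          rw [Finset.sum_const, Nat.card_Icc]
          have : i - 1 + 1 - 2 = i - 2 := by omega
          rw [this, nsmul_eq_mul, Nat.cast_sub hi2]
          push_cast; ring
  have hD : 0 < ((i : ℝ) - 1) * e i - ∑ k ∈ Icc 2 (i - 1), e k := by
    nlinarith [heipos]
  refine ⟨hD, ?_, ?_, ?_⟩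
  · -- second conjunct
    have h2 : ∑ j ∈ Icc t N, ((j : ℝ) - t + s) * σ j = 0 := by
      refine Finset.sum_eq_zero fun j hj => ?_
      simp only [Finset.mem_Icc] at hj
      rw [hσzero j (by omega) hj.2, mul_zero]
    have h1 : ∑ j ∈ Icc 2 s, ((j : ℝ) - 1) * σ j
        = ∑ j ∈ Icc 2 i, ((j : ℝ) - 1) * σ j := by
      refine (Finset.sum_subset (Finset.Icc_subset_Icc_right his) fun x hx hnx => ?_).symm
      simp only [Finset.mem_Icc] at hx hnx
      rw [hσzero x (by omega) (by omega), mul_zero]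
    rw [h1, h2, add_zero]
    have h3 : ∑ j ∈ Icc 2 i, ((j : ℝ) - 1) * σ j
        = (((i : ℝ) - 1) * e i - ∑ k ∈ Icc 2 (i - 1), e k)⁻¹ *
            ∑ j ∈ Icc 2 i, ((j:ℝ)-1)*(e j - e (j-1)) := by
      rw [Finset.mul_sum]
      refine Finset.sum_congr rfl fun j hj => ?_
      simp only [Finset.mem_Icc] at hj
      rw [hσ j hj.1 hj.2]; ring
    rw [h3, tele1 e i hi2, he1, sub_zero, inv_mul_cancel₀ hD.ne']
  · have h1 : ∑ j ∈ Icc 2 N, σ j * (e (j - 1) + e j)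
        = ∑ j ∈ Icc 2 i, σ j * (e (j - 1) + e j) := by
      refine (Finset.sum_subset (Finset.Icc_subset_Icc_right hiN) fun x hx hnx => ?_).symm
      simp only [Finset.mem_Icc] at hx hnx
      rw [hσzero x (by omega) (by omega), zero_mul]
    have h3 : ∑ j ∈ Icc 2 i, σ j * (e (j - 1) + e j)
        = (((i : ℝ) - 1) * e i - ∑ k ∈ Icc 2 (i - 1), e k)⁻¹ *
            ∑ j ∈ Icc 2 i, (e j - e (j-1))*(e (j-1) + e j) := by
      rw [Finset.mul_sum]
      refine Finset.sum_congr rfl fun j hj => ?_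
      simp only [Finset.mem_Icc] at hj
      rw [hσ j hj.1 hj.2]; ring
    rw [h1, h3, tele2 e i hi2, he1]
    ring
  · rw [Bcoef, if_pos his, div_eq_inv_mul]
end

section
/- Let N, s, t be integers with 1 ≤ s < t ≤ N, let e_1, …, e_N be real numbers with e_1 = 0, e_s = e_{s+1} = … = e_{t−1}, and e_{j−1} < e_j for every j in J = {2, …, s} ∪ {t, …, N}. Let Δ be the set of tuples (σ_j)_{j∈J} of real numbers such that σ_j ≥ 0 for all j ∈ J, the ratios σ_j/(e_j − e_{j−1}) are nonincreasing along J, and Σ_{j=2}^{s} (j−1) σ_j + Σ_{j=t}^{N} (j−t+s) σ_j = 1 (where σ_j is understood to be 0 for s+1 ≤ j ≤ t−1). Then Δ is the convex hull of the points σ^{(i)}, i ∈ J, defined by σ^{(i)}_j = α_i (e_j − e_{j−1}) for j ∈ J with j ≤ i and σ^{(i)}_j = 0 for j ∈ J with j > i, where α_i = ((i−1) e_i − Σ_{j=2}^{i−1} e_j)^{−1} for 2 ≤ i ≤ s and α_i = ((i−t+s) e_i − (e_1 + … + e_s + e_t + … + e_{i−1}))^{−1} for t ≤ i ≤ N. 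-/
open Finset

/-- The coefficient `α_i`: for `2 ≤ i ≤ s`, `α_i = ((i−1)e_i − Σ_{j=2}^{i−1} e_j)⁻¹`;
for `t ≤ i ≤ N`, `α_i = ((i−t+s)e_i − (e₁ + … + e_s + e_t + … + e_{i−1}))⁻¹`. -/
noncomputable def alphaCoef (e : ℕ → ℝ) (s t i : ℕ) : ℝ :=
  if i ≤ s then
    (((i : ℝ) - 1) * e i - ∑ j ∈ Finset.Icc 2 (i - 1), e j)⁻¹
  else
    (((i : ℝ) - t + s) * e i -
      (∑ j ∈ Finset.Icc 1 s, e j + ∑ j ∈ Finset.Icc t (i - 1), e j))⁻¹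

/-- The vertex `σ⁽ⁱ⁾` of the simplex: `σ⁽ⁱ⁾_j = α_i (e_j − e_{j−1})` for `j ∈ J`,
`j ≤ i`, and `σ⁽ⁱ⁾_j = 0` otherwise (in particular outside `J`). -/
noncomputable def vertexPt (e : ℕ → ℝ) (s t N i : ℕ) : ℕ → ℝ := fun j =>
  if j ∈ Icc 2 s ∪ Icc t N ∧ j ≤ i then alphaCoef e s t i * (e j - e (j - 1)) else 0

lemma tele_Ico (f : ℕ → ℝ) : ∀ (n a : ℕ), ∑ i ∈ Finset.Ico a (a+n), (f i - f (i+1)) = f a - f (a+n) := by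
  intro n
  induction n with
  | zero => simp
  | succ n ih =>
    intro a
    rw [show a + (n+1) = (a+n)+1 from rfl, Finset.sum_Ico_succ_top (by omega), ih]
    ring

lemma tele_Icc' (f : ℕ → ℝ) (a b : ℕ) (h : a ≤ b + 1) :
    ∑ i ∈ Finset.Icc a b, (f i - f (i+1)) = f a - f (b+1) := by
  rw [← Finset.Ico_add_one_right_eq_Icc, show b + 1 = a + (b+1-a) by omega, tele_Ico]

lemma eIcc_step (e : ℕ → ℝ) (he1 : e 1 = 0) (n : ℕ) (hn : 1 ≤ n) :
    ∑ j ∈ Finset.Icc 2 n, e j = ∑ j ∈ Finset.Icc 2 (n-1), e j + e n := by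
  rcases Nat.eq_or_lt_of_le hn with h | h
  · simp [← h, he1]
  · conv_lhs => rw [show n = (n-1)+1 by omega, Finset.sum_Icc_succ_top (by omega)]
    rw [show n - 1 + 1 = n by omega]

lemma eIcc_one (e : ℕ → ℝ) (he1 : e 1 = 0) (s : ℕ) (hs : 1 ≤ s) :
    ∑ j ∈ Finset.Icc 1 s, e j = ∑ j ∈ Finset.Icc 2 s, e j := by
  rw [show Finset.Icc 1 s = insert 1 (Finset.Icc 2 s) by ext j; simp [Finset.mem_Icc]; omega,
    Finset.sum_insert (by simp), he1, zero_add]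

lemma sumlow (s : ℕ) (e : ℕ → ℝ) (he1 : e 1 = 0) :
    ∀ i, 1 ≤ i → i ≤ s →
      ∑ j ∈ Finset.Icc 2 i, (((j:ℝ) - 1) * (e j - e (j-1)))
        = ((i:ℝ) - 1) * e i - ∑ j ∈ Finset.Icc 2 (i-1), e j := by
  intro i
  induction i with
  | zero => omega
  | succ n ih =>
    intro _ hns
    rcases Nat.eq_zero_or_pos n with h | h
    · subst h; simp
    · rw [Finset.sum_Icc_succ_top (by omega), ih h (by omega),
        show (n+1) - 1 = n from rfl, eIcc_step e he1 n h]
      push_cast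
      ring
lemma eIcc_step' (e : ℕ → ℝ) (t n : ℕ) (ht : 1 ≤ t) (hn : t ≤ n) :
    ∑ j ∈ Finset.Icc t n, e j = ∑ j ∈ Finset.Icc t (n-1), e j + e n := by
  conv_lhs => rw [show n = (n-1)+1 by omega, Finset.sum_Icc_succ_top (by omega)]
  rw [show n - 1 + 1 = n by omega]
noncomputable def wfun (s t j : ℕ) : ℝ := if j ≤ s then (j:ℝ) - 1 else (j:ℝ) - t + s

noncomputable def Asum (e : ℕ → ℝ) (s t N i : ℕ) : ℝ :=
  ∑ j ∈ (Finset.Icc 2 s ∪ Finset.Icc t N).filter (· ≤ i), wfun s t j * (e j - e (j-1))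

lemma filter_low (s t N i : ℕ) (hst : s < t) (hi : i ≤ s) :
    (Finset.Icc 2 s ∪ Finset.Icc t N).filter (· ≤ i) = Finset.Icc 2 i := by
  ext j; simp [Finset.mem_Icc, Finset.mem_filter]; omega

lemma filter_high (s t N i : ℕ) (hst : s < t) (ht : t ≤ i) (hiN : i ≤ N) :
    (Finset.Icc 2 s ∪ Finset.Icc t N).filter (· ≤ i) = Finset.Icc 2 s ∪ Finset.Icc t i := by
  ext j; simp [Finset.mem_Icc, Finset.mem_filter]; omega

lemma sumhigh (s t : ℕ) (e : ℕ → ℝ) (hs : 1 ≤ s) (hst : s < t) (he1 : e 1 = 0)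
    (hets : e (t-1) = e s) :
    ∀ i, t ≤ i →
      ∑ j ∈ Finset.Icc 2 s, (((j:ℝ) - 1) * (e j - e (j-1)))
        + ∑ j ∈ Finset.Icc t i, (((j:ℝ) - t + s) * (e j - e (j-1)))
      = ((i:ℝ) - t + s) * e i - (∑ j ∈ Finset.Icc 1 s, e j + ∑ j ∈ Finset.Icc t (i-1), e j) := by
  intro i hi
  induction i, hi using Nat.le_induction with
  | base =>
    rw [show Finset.Icc t t = {t} from Finset.Icc_self t, Finset.sum_singleton,
      sumlow s e he1 s hs le_rfl, hets,
      show Finset.Icc t (t-1) = ∅ from Finset.Icc_eq_empty (by omega),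
      eIcc_one e he1 s hs, eIcc_step e he1 s hs]
    simp only [Finset.sum_empty]
    ring
  | succ n hn ih =>
    rw [Finset.sum_Icc_succ_top (by omega : t ≤ n + 1), ← add_assoc, ih,
      show (n+1) - 1 = n from rfl,
      eIcc_step' e t n (by omega) hn]
    push_cast
    ring

lemma Asum_pos (s t N : ℕ) (e : ℕ → ℝ) (hs : 1 ≤ s) (hst : s < t)
    (hestrict : ∀ j ∈ Finset.Icc 2 s ∪ Finset.Icc t N, e (j - 1) < e j) :
    ∀ i ∈ Finset.Icc 2 s ∪ Finset.Icc t N, 0 < Asum e s t N i := by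
  intro i hi
  apply Finset.sum_pos
  · intro j hj
    rw [Finset.mem_filter] at hj
    have hj1 := hj.1
    have hd : 0 < e j - e (j-1) := sub_pos.mpr (hestrict j hj1)
    apply mul_pos _ hd
    simp only [Finset.mem_Icc, Finset.mem_union] at hj1
    unfold wfun
    split_ifs with h
    · have : 2 ≤ j := by omega
      have : (2:ℝ) ≤ (j:ℝ) := by exact_mod_cast this
      linarith
    · have : t ≤ j := by omega
      have h2 : (t:ℝ) ≤ (j:ℝ) := by exact_mod_cast this
      have h3 : (1:ℝ) ≤ (s:ℝ) := by exact_mod_cast hs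
      linarith
  · exact ⟨i, Finset.mem_filter.mpr ⟨hi, le_rfl⟩⟩

lemma alpha_eq (s t N : ℕ) (e : ℕ → ℝ) (hs : 1 ≤ s) (hst : s < t) (he1 : e 1 = 0)
    (hets : e (t-1) = e s) :
    ∀ i ∈ Finset.Icc 2 s ∪ Finset.Icc t N, alphaCoef e s t i = (Asum e s t N i)⁻¹ := by
  intro i hi
  simp only [Finset.mem_union, Finset.mem_Icc] at hi
  unfold alphaCoef Asum
  rcases hi with ⟨h2, hslow⟩ | ⟨ht', hN⟩
  · rw [if_pos hslow, filter_low s t N i hst hslow]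
    congr 1
    rw [← sumlow s e he1 i (by omega) hslow]
    apply Finset.sum_congr rfl
    intro j hj
    simp only [Finset.mem_Icc] at hj
    unfold wfun
    rw [if_pos (by omega)]
  · rw [if_neg (by omega), filter_high s t N i hst ht' hN]
    congr 1
    rw [← sumhigh s t e hs hst he1 hets i ht',
      Finset.sum_union (by
        rw [Finset.disjoint_left]
        intro a ha ha'
        simp only [Finset.mem_Icc] at ha ha'
        omega)]
    congr 1
    · apply Finset.sum_congr rfl
      intro j hj
      simp only [Finset.mem_Icc] at hj
      unfold wfun
      rw [if_pos (by omega)]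
    · apply Finset.sum_congr rfl
      intro j hj
      simp only [Finset.mem_Icc] at hj
      unfold wfun
      rw [if_neg (by omega)]

/-- Let `1 ≤ s < t ≤ N`, `e₁ = 0`, `e_s = … = e_{t−1}` and
`e_{j−1} < e_j` for all `j ∈ J = {2,…,s} ∪ {t,…,N}`. The simplex `Δ` of tuples
`(σ_j)_{j∈J}` (extended by `0` outside `J`) with `σ_j ≥ 0`, ratios
`σ_j/(e_j − e_{j−1})` nonincreasing along `J`, and
`Σ_{j=2}^{s} (j−1)σ_j + Σ_{j=t}^{N} (j−t+s)σ_j = 1`, is the convex hull of the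
points `σ⁽ⁱ⁾`, `i ∈ J`. -/
theorem stmt8 (N s t : ℕ) (e : ℕ → ℝ)
    (hs : 1 ≤ s) (hst : s < t) (htN : t ≤ N)
    (he1 : e 1 = 0)
    (heconst : ∀ j, s ≤ j → j ≤ t - 1 → e j = e s)
    (hestrict : ∀ j ∈ Icc 2 s ∪ Icc t N, e (j - 1) < e j) :
    {σ : ℕ → ℝ |
        (∀ j ∉ Icc 2 s ∪ Icc t N, σ j = 0) ∧
        (∀ j ∈ Icc 2 s ∪ Icc t N, 0 ≤ σ j) ∧
        (∀ j ∈ Icc 2 s ∪ Icc t N, ∀ j' ∈ Icc 2 s ∪ Icc t N, j < j' →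
          σ j' * (e j - e (j - 1)) ≤ σ j * (e j' - e (j' - 1))) ∧
        (∑ j ∈ Icc 2 s, ((j : ℝ) - 1) * σ j) +
            ∑ j ∈ Icc t N, ((j : ℝ) - t + s) * σ j = 1} =
      convexHull ℝ (vertexPt e s t N '' ↑(Icc 2 s ∪ Icc t N)) := by
  classical
  have hts : e (t-1) = e s := heconst (t-1) (by omega) le_rfl
  have hdisj : Disjoint (Icc 2 s) (Icc t N) := by
    rw [Finset.disjoint_left]
    intro a ha ha'
    simp only [mem_Icc] at ha ha'
    omega
  have hd : ∀ j ∈ Icc 2 s ∪ Icc t N, 0 < e j - e (j-1) :=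
    fun j hj => sub_pos.mpr (hestrict j hj)
  have halpha := alpha_eq s t N e hs hst he1 hts
  have hApos := Asum_pos s t N e hs hst hestrict
  have hJle : ∀ j ∈ Icc 2 s ∪ Icc t N, j ≤ N := by
    intro j hj
    simp only [mem_union, mem_Icc] at hj
    omega
  have hsum_split : ∀ σ : ℕ → ℝ, ∑ j ∈ Icc 2 s ∪ Icc t N, wfun s t j * σ j =
      (∑ j ∈ Icc 2 s, ((j:ℝ) - 1) * σ j) + ∑ j ∈ Icc t N, ((j:ℝ) - t + s) * σ j := by
    intro σ
    rw [Finset.sum_union hdisj]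
    congr 1
    · apply Finset.sum_congr rfl
      intro j hj
      simp only [mem_Icc] at hj
      unfold wfun
      rw [if_pos (by omega)]
    · apply Finset.sum_congr rfl
      intro j hj
      simp only [mem_Icc] at hj
      unfold wfun
      rw [if_neg (by omega)]
  apply Set.Subset.antisymm
  · -- Δ ⊆ hull
    rintro σ ⟨hz, hnn, hmono, hsum⟩
    set r : ℕ → ℝ := fun j => σ j / (e j - e (j-1)) with hr
    set ρ : ℕ → ℝ := fun i =>
      if h : ((Icc 2 s ∪ Icc t N).filter (fun j => i ≤ j)).Nonempty then
        r (((Icc 2 s ∪ Icc t N).filter (fun j => i ≤ j)).min' h) else 0 with hρ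
    have hρJ : ∀ i ∈ Icc 2 s ∪ Icc t N, ρ i = r i := by
      intro i hi
      have hne : ((Icc 2 s ∪ Icc t N).filter (fun j => i ≤ j)).Nonempty :=
        ⟨i, mem_filter.mpr ⟨hi, le_rfl⟩⟩
      simp only [hρ]
      rw [dif_pos hne]
      congr 1
      apply le_antisymm
      · exact Finset.min'_le _ i (mem_filter.mpr ⟨hi, le_rfl⟩)
      · exact (Finset.mem_filter.mp (Finset.min'_mem _ hne)).2
    have hρnotJ : ∀ i ∉ Icc 2 s ∪ Icc t N, ρ i = ρ (i+1) := by
      intro i hi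
      have hfeq : (Icc 2 s ∪ Icc t N).filter (fun j => i ≤ j)
          = (Icc 2 s ∪ Icc t N).filter (fun j => i+1 ≤ j) := by
        ext j
        simp only [mem_filter]
        constructor
        · rintro ⟨hj, hij⟩
          refine ⟨hj, ?_⟩
          rcases Nat.eq_or_lt_of_le hij with h | h
          · exact absurd (h ▸ hj) hi
          · omega
        · rintro ⟨hj, hij⟩
          exact ⟨hj, by omega⟩
      simp only [hρ, hfeq]
    have hρtop : ρ (N+1) = 0 := by
      simp only [hρ]
      rw [dif_neg]
      rintro ⟨j, hj⟩
      rw [mem_filter] at hj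
      have := hJle j hj.1
      omega
    have hrnn : ∀ i ∈ Icc 2 s ∪ Icc t N, 0 ≤ r i :=
      fun i hi => div_nonneg (hnn i hi) (le_of_lt (hd i hi))
    have hρmono : ∀ i, ρ (i+1) ≤ ρ i := by
      intro i
      by_cases hiJ : i ∈ Icc 2 s ∪ Icc t N
      · rw [hρJ i hiJ]
        by_cases hne : ((Icc 2 s ∪ Icc t N).filter (fun j => i+1 ≤ j)).Nonempty
        · simp only [hρ]
          rw [dif_pos hne]
          have hmJ : ((Icc 2 s ∪ Icc t N).filter (fun j => i+1 ≤ j)).min' hne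
                ∈ Icc 2 s ∪ Icc t N
              ∧ i+1 ≤ ((Icc 2 s ∪ Icc t N).filter (fun j => i+1 ≤ j)).min' hne :=
            mem_filter.mp (min'_mem _ hne)
          have hle := hmono i hiJ _ hmJ.1 (by omega)
          simp only [hr]
          rw [div_le_div_iff₀ (hd _ hmJ.1) (hd i hiJ)]
          exact hle
        · simp only [hρ]
          rw [dif_neg hne]
          exact hrnn i hiJ
      · rw [hρnotJ i hiJ]
    set δ : ℕ → ℝ := fun i => ρ i - ρ (i+1) with hδ
    have hδnn : ∀ i, 0 ≤ δ i := fun i => sub_nonneg.mpr (hρmono i)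
    have hδ0 : ∀ i ∉ Icc 2 s ∪ Icc t N, δ i = 0 := by
      intro i hi
      simp only [hδ]
      rw [hρnotJ i hi, sub_self]
    have htel' : ∀ j, ∑ i ∈ (Icc 2 s ∪ Icc t N).filter (fun x => j ≤ x), δ i = ρ j := by
      intro j
      by_cases hjN : j ≤ N + 1
      · have hsub : (Icc 2 s ∪ Icc t N).filter (fun x => j ≤ x) ⊆ Finset.Icc j N := by
          intro x hx
          rw [mem_filter] at hx
          have := hJle x hx.1
          simp only [mem_Icc]
          exact ⟨hx.2, this⟩
        rw [Finset.sum_subset hsub (by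
          intro x hx hx'
          apply hδ0
          intro hxJ
          exact hx' (mem_filter.mpr ⟨hxJ, (mem_Icc.mp hx).1⟩))]
        simp only [hδ]
        rw [tele_Icc' ρ j N hjN, hρtop, sub_zero]
      · have h1 : (Icc 2 s ∪ Icc t N).filter (fun x => j ≤ x) = ∅ := by
          apply Finset.filter_eq_empty_iff.mpr
          intro x hx
          have := hJle x hx
          omega
        have h2 : ρ j = 0 := by
          simp only [hρ]
          rw [dif_neg]
          rintro ⟨x, hx⟩
          rw [mem_filter] at hx
          have := hJle x hx.1
          omega
        rw [h1, h2]
        simp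
    set c : ℕ → ℝ := fun i => Asum e s t N i * δ i with hc
    have hcnn : ∀ i ∈ Icc 2 s ∪ Icc t N, 0 ≤ c i :=
      fun i hi => mul_nonneg (le_of_lt (hApos i hi)) (hδnn i)
    have hc1 : ∑ i ∈ Icc 2 s ∪ Icc t N, c i = 1 := by
      have step1 : ∑ i ∈ Icc 2 s ∪ Icc t N, c i
          = ∑ i ∈ Icc 2 s ∪ Icc t N, ∑ j ∈ Icc 2 s ∪ Icc t N,
              (if j ≤ i then wfun s t j * (e j - e (j-1)) * δ i else 0) := by
        apply Finset.sum_congr rfl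
        intro i hi
        simp only [hc, Asum]
        rw [Finset.sum_mul, Finset.sum_filter]
      have step2 : ∑ i ∈ Icc 2 s ∪ Icc t N, ∑ j ∈ Icc 2 s ∪ Icc t N,
              (if j ≤ i then wfun s t j * (e j - e (j-1)) * δ i else 0)
          = ∑ j ∈ Icc 2 s ∪ Icc t N, wfun s t j * (e j - e (j-1)) * ρ j := by
        rw [Finset.sum_comm]
        apply Finset.sum_congr rfl
        intro j hj
        rw [← Finset.sum_filter, ← Finset.mul_sum, htel' j]
      rw [step1, step2]
      have step3 : ∀ j ∈ Icc 2 s ∪ Icc t N,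
          wfun s t j * (e j - e (j-1)) * ρ j = wfun s t j * σ j := by
        intro j hj
        rw [hρJ j hj]
        simp only [hr]
        rw [mul_assoc, mul_comm (e j - e (j-1)), div_mul_cancel₀ _ (ne_of_gt (hd j hj))]
      rw [Finset.sum_congr rfl step3, hsum_split σ, hsum]
    have key : σ = (Icc 2 s ∪ Icc t N).centerMass c (vertexPt e s t N) := by
      rw [Finset.centerMass, hc1, inv_one, one_smul]
      funext j
      rw [Finset.sum_apply]
      by_cases hjJ : j ∈ Icc 2 s ∪ Icc t N
      · have hrw : ∀ i ∈ Icc 2 s ∪ Icc t N, (c i • vertexPt e s t N i) j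
            = (if j ≤ i then (e j - e (j-1)) * δ i else 0) := by
          intro i hi
          rw [Pi.smul_apply, smul_eq_mul]
          simp only [vertexPt]
          by_cases hji : j ≤ i
          · rw [if_pos ⟨hjJ, hji⟩, if_pos hji, halpha i hi]
            simp only [hc]
            have hA := (hApos i hi).ne'
            field_simp
          · rw [if_neg (fun h => hji h.2), if_neg hji, mul_zero]
        rw [Finset.sum_congr rfl hrw, ← Finset.sum_filter, ← Finset.mul_sum, htel' j,
          hρJ j hjJ]
        simp only [hr]
        rw [mul_comm, div_mul_cancel₀ _ (ne_of_gt (hd j hjJ))]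
      · rw [hz j hjJ]
        symm
        apply Finset.sum_eq_zero
        intro i hi
        rw [Pi.smul_apply, smul_eq_mul]
        simp only [vertexPt]
        rw [if_neg (fun h => hjJ h.1), mul_zero]
    rw [key]
    exact Finset.centerMass_mem_convexHull _ hcnn (by rw [hc1]; norm_num)
      (fun i hi => Set.mem_image_of_mem _ (Finset.mem_coe.mpr hi))
  · -- hull ⊆ Δ
    apply convexHull_min
    · rintro x ⟨i, hi, rfl⟩
      rw [Finset.mem_coe] at hi
      have hαA := halpha i hi
      have hAi := hApos i hi
      have hα : 0 < alphaCoef e s t i := by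
        rw [hαA]
        exact inv_pos.mpr hAi
      refine ⟨?_, ?_, ?_, ?_⟩
      · intro j hj
        simp only [vertexPt]
        exact if_neg (fun h => hj h.1)
      · intro j hj
        simp only [vertexPt]
        split_ifs with h
        · exact le_of_lt (mul_pos hα (hd j hj))
        · exact le_rfl
      · intro j hj j' hj' hlt
        simp only [vertexPt]
        by_cases h1 : j' ≤ i
        · rw [if_pos ⟨hj', h1⟩, if_pos ⟨hj, by omega⟩]
          apply le_of_eq
          ring
        · rw [if_neg (fun h => h1 h.2)]
          by_cases h2 : j ≤ i
          · rw [if_pos ⟨hj, h2⟩, zero_mul]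
            exact mul_nonneg (mul_nonneg (le_of_lt hα) (le_of_lt (hd j hj)))
              (le_of_lt (hd j' hj'))
          · rw [if_neg (fun h => h2 h.2), zero_mul, zero_mul]
      · rw [← hsum_split (vertexPt e s t N i)]
        have hrw : ∀ j ∈ Icc 2 s ∪ Icc t N, wfun s t j * vertexPt e s t N i j
            = if j ≤ i then wfun s t j * (e j - e (j-1)) * alphaCoef e s t i else 0 := by
          intro j hj
          simp only [vertexPt]
          by_cases h : j ≤ i
          · rw [if_pos ⟨hj, h⟩, if_pos h]
            ring
          · rw [if_neg (fun hh => h hh.2), if_neg h, mul_zero]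
        rw [Finset.sum_congr rfl hrw, ← Finset.sum_filter, ← Finset.sum_mul, hαA]
        have : (∑ j ∈ (Icc 2 s ∪ Icc t N).filter (fun j => j ≤ i),
            wfun s t j * (e j - e (j-1))) = Asum e s t N i := by
          simp only [Asum]
        rw [this]
        exact mul_inv_cancel₀ (ne_of_gt hAi)
    · intro x hx y hy a b ha hb hab
      obtain ⟨hx0, hx1, hx2, hx3⟩ := hx
      obtain ⟨hy0, hy1, hy2, hy3⟩ := hy
      refine ⟨?_, ?_, ?_, ?_⟩
      · intro j hj
        simp only [Pi.add_apply, Pi.smul_apply, smul_eq_mul]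
        rw [hx0 j hj, hy0 j hj, mul_zero, mul_zero, add_zero]
      · intro j hj
        simp only [Pi.add_apply, Pi.smul_apply, smul_eq_mul]
        exact add_nonneg (mul_nonneg ha (hx1 j hj)) (mul_nonneg hb (hy1 j hj))
      · intro j hj j' hj' hlt
        simp only [Pi.add_apply, Pi.smul_apply, smul_eq_mul]
        have h1 := hx2 j hj j' hj' hlt
        have h2 := hy2 j hj j' hj' hlt
        calc (a * x j' + b * y j') * (e j - e (j-1))
            = a * (x j' * (e j - e (j-1))) + b * (y j' * (e j - e (j-1))) := by ring
          _ ≤ a * (x j * (e j' - e (j'-1))) + b * (y j * (e j' - e (j'-1))) :=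
              add_le_add (mul_le_mul_of_nonneg_left h1 ha) (mul_le_mul_of_nonneg_left h2 hb)
          _ = (a * x j + b * y j) * (e j' - e (j'-1)) := by ring
      · simp only [Pi.add_apply, Pi.smul_apply, smul_eq_mul]
        have hexp : ∀ (S : Finset ℕ) (w : ℕ → ℝ) (u v : ℕ → ℝ),
            ∑ j ∈ S, w j * (a * u j + b * v j)
              = a * ∑ j ∈ S, w j * u j + b * ∑ j ∈ S, w j * v j := by
          intro S w u v
          rw [Finset.mul_sum, Finset.mul_sum, ← Finset.sum_add_distrib]
          apply Finset.sum_congr rfl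
          intro j _
          ring
        rw [hexp, hexp]
        linear_combination a * hx3 + b * hy3 + hab
end
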